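/- arXiv:0705.0211 — 6 statements merged into one kernel-verified Lean document; each statement's English description precedes it below -/
import Mathlib

section
/- Let H be a real separable Hilbert space, X a centered H-valued random element on a probability space (Ω,P) with E‖X‖⁴ < ∞, and let a₁,…,a_q ∈ H be linearly independent. Set A = (⟨X,a₁⟩,…,⟨X,a_q⟩) ∈ ℝ^q and suppose Y = f(A,ε) for a measurable function f and a random element ε (in some measurable space) independent of X. Assume condition (A1): for every u ∈ H there exists v ∈ ℝ^q such that E[⟨u,X⟩ | σ(A)] = vᵀA almost surely. Then the conditional expectation E[X | σ(Y)] takes its values almost surely in the linear span of Γ_X a₁, …, Γ_X a_q, where Γ_X is the covariance operator of X. -/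
open MeasureTheory ProbabilityTheory
open scoped RealInnerProductSpace

section Aux

variable {Ω : Type*} {m m0 : MeasurableSpace Ω} {P : Measure Ω} [IsProbabilityMeasure P]

/-- Conditional expectation commutes with the inner product against a fixed vector. -/
lemma aux_condexp_inner {H : Type*} [NormedAddCommGroup H] [InnerProductSpace ℝ H]
    [CompleteSpace H] (hm : m ≤ m0) {X : Ω → H} (hX : Integrable X P) (u : H) :
    (fun ω => ⟪u, (P[X|m]) ω⟫) =ᵐ[P] P[(fun ω => ⟪u, X ω⟫)|m] := by
  have h1 : Integrable (fun ω => ⟪u, X ω⟫) P := by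
    have := (innerSL ℝ u).integrable_comp hX
    simpa using this
  refine ae_eq_condExp_of_forall_setIntegral_eq hm h1
    (fun s _ _ => ?_) (fun s hs _ => ?_)
    (((innerSL ℝ u).continuous.comp_stronglyMeasurable
      stronglyMeasurable_condExp).aestronglyMeasurable)
  · have := ((innerSL ℝ u).integrable_comp (integrable_condExp (μ := P) (f := X) (m := m))).integrableOn
      (s := s)
    simpa using this
  · calc ∫ ω in s, ⟪u, (P[X|m]) ω⟫ ∂P
        = ∫ ω in s, innerSL ℝ u ((P[X|m]) ω) ∂P := by simp
      _ = innerSL ℝ u (∫ ω in s, (P[X|m]) ω ∂P) :=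
          (innerSL ℝ u).integral_comp_comm integrable_condExp.integrableOn
      _ = innerSL ℝ u (∫ ω in s, X ω ∂P) := by rw [setIntegral_condExp hm hX hs]
      _ = ∫ ω in s, innerSL ℝ u (X ω) ∂P :=
          ((innerSL ℝ u).integral_comp_comm hX.integrableOn).symm
      _ = ∫ ω in s, ⟪u, X ω⟫ ∂P := by simp

/-- Pull-out property in integrated form. -/
lemma aux_integral_mul_condexp (hm : m ≤ m0) {ψ g : Ω → ℝ}
    (hψ : StronglyMeasurable[m] ψ) (hg : Integrable g P) (hψg : Integrable (ψ * g) P) :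
    ∫ ω, ψ ω * g ω ∂P = ∫ ω, ψ ω * (P[g|m]) ω ∂P := by
  have h := condExp_mul_of_stronglyMeasurable_left hψ hψg hg
  calc ∫ ω, ψ ω * g ω ∂P = ∫ ω, (ψ * g) ω ∂P := rfl
    _ = ∫ ω, (P[ψ * g|m]) ω ∂P := (integral_condExp hm).symm
    _ = ∫ ω, (ψ * P[g|m]) ω ∂P := integral_congr_ae h
    _ = ∫ ω, ψ ω * (P[g|m]) ω ∂P := rfl

end Aux

/-- Let `H` be a real separable Hilbert space, `X` a centered `H`-valued
random element with `E‖X‖⁴ < ∞`, `a₁, …, a_q` linearly independent, `A = (⟪X,aⱼ⟫)ⱼ`,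
`Y = f(A, ε)` with `ε` independent of `X`.  Under the linearity condition (A1),
`E[X | σ(Y)]` takes its values a.s. in the span of `Γ_X a₁, …, Γ_X a_q`, where `Γ_X` is
the covariance operator of `X`. -/
theorem functional_SIR_inverse_regression
    {Ω : Type*} [MeasurableSpace Ω] (P : Measure Ω) [IsProbabilityMeasure P]
    {H : Type*} [NormedAddCommGroup H] [InnerProductSpace ℝ H] [CompleteSpace H]
    [SecondCountableTopology H] [MeasurableSpace H] [BorelSpace H]
    {E : Type*} [MeasurableSpace E]
    (X : Ω → H) (hXmeas : Measurable X)
    (hXcentered : ∫ ω, X ω ∂P = 0)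
    (hX4 : Integrable (fun ω => ‖X ω‖ ^ 4) P)
    {q : ℕ} (a : Fin q → H) (ha : LinearIndependent ℝ a)
    (A : Ω → Fin q → ℝ) (hA : ∀ ω, A ω = fun j => ⟪X ω, a j⟫)
    (ε : Ω → E) (hεmeas : Measurable ε) (hindep : IndepFun ε X P)
    (f : (Fin q → ℝ) × E → ℝ) (hf : Measurable f)
    (Y : Ω → ℝ) (hY : ∀ ω, Y ω = f (A ω, ε ω))
    -- (A1): for every `u ∈ H` there is `v ∈ ℝ^q` with `E[⟪u,X⟫ | σ(A)] = vᵀ A` a.s.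
    (hA1 : ∀ u : H, ∃ v : Fin q → ℝ,
      P[(fun ω => ⟪u, X ω⟫) | MeasurableSpace.comap A inferInstance]
        =ᵐ[P] fun ω => ∑ j, v j * A ω j)
    -- the covariance operator of `X`
    (ΓX : H → H) (hΓX : ∀ u, ΓX u = ∫ ω, ⟪u, X ω⟫ • X ω ∂P) :
    ∀ᵐ ω ∂P,
      (P[X | MeasurableSpace.comap Y inferInstance]) ω
        ∈ Submodule.span ℝ (Set.range fun j => ΓX (a j)) := by
  -- measurability of `A` and `Y`
  have hAmeas : Measurable A := by
    have h : A = fun ω j => ⟪X ω, a j⟫ := funext hA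
    rw [h]
    exact measurable_pi_lambda _ fun j => hXmeas.inner measurable_const
  have hYmeas : Measurable Y := by
    have h : Y = fun ω => f (A ω, ε ω) := funext hY
    rw [h]
    exact hf.comp (hAmeas.prodMk hεmeas)
  have hmY : MeasurableSpace.comap Y inferInstance ≤ _ := hYmeas.comap_le
  have hmA : MeasurableSpace.comap A inferInstance ≤ _ := hAmeas.comap_le
  -- integrable bound `M := (1 + ‖X‖)²`
  have hM : Integrable (fun ω => (1 + ‖X ω‖) ^ 2) P := by
    refine ((hX4.const_mul 4).add (integrable_const 4)).mono'
      (((measurable_const.add hXmeas.norm).pow_const 2).aestronglyMeasurable)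
      (ae_of_all _ fun ω => ?_)
    have h0 : (0 : ℝ) ≤ ‖X ω‖ := norm_nonneg _
    simp only [Pi.add_apply]
    rw [Real.norm_eq_abs, abs_of_nonneg (by positivity)]
    nlinarith [sq_nonneg (‖X ω‖ ^ 2 - 1), sq_nonneg (‖X ω‖ - 1)]
  have hXle : ∀ ω, ‖X ω‖ ≤ (1 + ‖X ω‖) ^ 2 := fun ω => by nlinarith [norm_nonneg (X ω)]
  have hX2le : ∀ ω, ‖X ω‖ ^ 2 ≤ (1 + ‖X ω‖) ^ 2 := fun ω => by nlinarith [norm_nonneg (X ω)]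
  -- generic integrability criterion
  have hbd : ∀ {φ : Ω → ℝ} (C : ℝ), AEStronglyMeasurable φ P →
      (∀ ω, |φ ω| ≤ C * (1 + ‖X ω‖) ^ 2) → Integrable φ P := by
    intro φ C hφm hφ
    refine (hM.const_mul C).mono' hφm (ae_of_all _ fun ω => ?_)
    rw [Real.norm_eq_abs]
    exact hφ ω
  have hXint : Integrable X P := hM.mono' hXmeas.aestronglyMeasurable (ae_of_all _ fun ω => by
    simpa using hXle ω)
  have hg_int : ∀ u : H, Integrable (fun ω => ⟪u, X ω⟫) P := fun u =>
    hbd ‖u‖ (measurable_const.inner hXmeas).aestronglyMeasurable fun ω =>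
      (abs_real_inner_le_norm u (X ω)).trans
        (mul_le_mul_of_nonneg_left (hXle ω) (norm_nonneg u))
  have hAbd : ∀ ω k, |A ω k| ≤ ‖a k‖ * ‖X ω‖ := by
    intro ω k
    rw [hA ω]
    calc |⟪X ω, a k⟫| ≤ ‖X ω‖ * ‖a k‖ := abs_real_inner_le_norm _ _
      _ = ‖a k‖ * ‖X ω‖ := mul_comm _ _
  -- Step B: vanishing of the conditional expectation given `A` for orthogonal directions
  have hcondA : ∀ u : H, (∀ j, ⟪u, ΓX (a j)⟫ = 0) →
      P[(fun ω => ⟪u, X ω⟫) | MeasurableSpace.comap A inferInstance] =ᵐ[P] 0 := by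
    intro u hu
    obtain ⟨v, hv⟩ := hA1 u
    set g : Ω → ℝ := fun ω => ⟪u, X ω⟫ with hgdef
    set h : Ω → ℝ := fun ω => ∑ j, v j * A ω j with hhdef
    set Ch : ℝ := ∑ j, |v j| * ‖a j‖ with hChdef
    have hCh0 : 0 ≤ Ch := Finset.sum_nonneg fun j _ =>
      mul_nonneg (abs_nonneg _) (norm_nonneg _)
    have hAcm : Measurable[MeasurableSpace.comap A inferInstance] A :=
      measurable_iff_comap_le.mpr le_rfl
    have hAk : ∀ k, StronglyMeasurable[MeasurableSpace.comap A inferInstance]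
        (fun ω => A ω k) := fun k =>
      ((measurable_pi_apply k).comp hAcm).stronglyMeasurable
    have hhm : Measurable h :=
      Finset.measurable_sum _ fun j _ =>
        measurable_const.mul ((measurable_pi_apply j).comp hAmeas)
    have hhbd : ∀ ω, |h ω| ≤ Ch * ‖X ω‖ := by
      intro ω
      calc |h ω| ≤ ∑ j, |v j * A ω j| := Finset.abs_sum_le_sum_abs _ _
        _ ≤ ∑ j, |v j| * (‖a j‖ * ‖X ω‖) := by
            refine Finset.sum_le_sum fun j _ => ?_
            rw [abs_mul]
            exact mul_le_mul_of_nonneg_left (hAbd ω j) (abs_nonneg _)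
        _ = Ch * ‖X ω‖ := by rw [hChdef, Finset.sum_mul]; congr 1; funext j; ring
    have hgbd : ∀ ω, |g ω| ≤ ‖u‖ * ‖X ω‖ := fun ω => abs_real_inner_le_norm u (X ω)
    have hint1 : ∀ k, Integrable (fun ω => A ω k * g ω) P := by
      intro k
      refine hbd (‖a k‖ * ‖u‖)
        (((measurable_pi_apply k).comp hAmeas).mul
          (measurable_const.inner hXmeas)).aestronglyMeasurable fun ω => ?_
      rw [abs_mul]
      calc |A ω k| * |g ω| ≤ (‖a k‖ * ‖X ω‖) * (‖u‖ * ‖X ω‖) :=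
            mul_le_mul (hAbd ω k) (hgbd ω) (abs_nonneg _)
              (mul_nonneg (norm_nonneg _) (norm_nonneg _))
        _ = (‖a k‖ * ‖u‖) * ‖X ω‖ ^ 2 := by ring
        _ ≤ (‖a k‖ * ‖u‖) * (1 + ‖X ω‖) ^ 2 := by
            exact mul_le_mul_of_nonneg_left (hX2le ω)
              (mul_nonneg (norm_nonneg _) (norm_nonneg _))
    have hint2 : ∀ k, Integrable (fun ω => A ω k * h ω) P := by
      intro k
      refine hbd (‖a k‖ * Ch)
        (((measurable_pi_apply k).comp hAmeas).mul hhm).aestronglyMeasurable fun ω => ?_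
      rw [abs_mul]
      calc |A ω k| * |h ω| ≤ (‖a k‖ * ‖X ω‖) * (Ch * ‖X ω‖) :=
            mul_le_mul (hAbd ω k) (hhbd ω) (abs_nonneg _)
              (mul_nonneg (norm_nonneg _) (norm_nonneg _))
        _ = (‖a k‖ * Ch) * ‖X ω‖ ^ 2 := by ring
        _ ≤ (‖a k‖ * Ch) * (1 + ‖X ω‖) ^ 2 :=
            mul_le_mul_of_nonneg_left (hX2le ω) (mul_nonneg (norm_nonneg _) hCh0)
    have hinthh : Integrable (fun ω => h ω * h ω) P := by
      refine hbd (Ch * Ch) (hhm.mul hhm).aestronglyMeasurable fun ω => ?_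
      rw [abs_mul]
      calc |h ω| * |h ω| ≤ (Ch * ‖X ω‖) * (Ch * ‖X ω‖) :=
            mul_le_mul (hhbd ω) (hhbd ω) (abs_nonneg _) (mul_nonneg hCh0 (norm_nonneg _))
        _ = (Ch * Ch) * ‖X ω‖ ^ 2 := by ring
        _ ≤ (Ch * Ch) * (1 + ‖X ω‖) ^ 2 :=
            mul_le_mul_of_nonneg_left (hX2le ω) (mul_nonneg hCh0 hCh0)
    have hsm_int : ∀ k, Integrable (fun ω => ⟪a k, X ω⟫ • X ω) P := by
      intro k
      refine (hM.const_mul ‖a k‖).mono'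
        ((measurable_const.inner hXmeas).smul hXmeas).aestronglyMeasurable
        (ae_of_all _ fun ω => ?_)
      rw [norm_smul, Real.norm_eq_abs (r := ⟪a k, X ω⟫)]
      calc |⟪a k, X ω⟫| * ‖X ω‖ ≤ (‖a k‖ * ‖X ω‖) * ‖X ω‖ :=
            mul_le_mul_of_nonneg_right (abs_real_inner_le_norm _ _) (norm_nonneg _)
        _ = ‖a k‖ * ‖X ω‖ ^ 2 := by ring
        _ ≤ ‖a k‖ * (1 + ‖X ω‖) ^ 2 :=
            mul_le_mul_of_nonneg_left (hX2le ω) (norm_nonneg _)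
    have hIk : ∀ k, ∫ ω, A ω k * g ω ∂P = ⟪u, ΓX (a k)⟫ := by
      intro k
      rw [hΓX (a k)]
      have h2 : ⟪u, ∫ ω, ⟪a k, X ω⟫ • X ω ∂P⟫
          = ∫ ω, innerSL ℝ u (⟪a k, X ω⟫ • X ω) ∂P :=
        ((innerSL ℝ u).integral_comp_comm (hsm_int k)).symm
      rw [h2]
      congr 1
      funext ω
      rw [hA ω]
      simp only [innerSL_apply_apply, real_inner_smul_right]
      rw [real_inner_comm (X ω) (a k)]
    have hIk' : ∀ k, ∫ ω, A ω k * h ω ∂P = 0 := by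
      intro k
      have h3 := aux_integral_mul_condexp hmA (hAk k) (hg_int u) (hint1 k)
      have h4 : ∫ ω, A ω k
          * (P[g | MeasurableSpace.comap A inferInstance]) ω ∂P
          = ∫ ω, A ω k * h ω ∂P :=
        integral_congr_ae (hv.mono fun ω hω => by simp only []; rw [hω])
      rw [← h4, ← h3, hIk k, hu k]
    have hhh : ∫ ω, h ω * h ω ∂P = 0 := by
      have h5 : (fun ω => h ω * h ω) = fun ω => ∑ k, v k * (A ω k * h ω) := by
        funext ω
        rw [hhdef]
        simp only
        rw [Finset.sum_mul]
        congr 1; funext k; ring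
      rw [h5, integral_finset_sum _ fun k _ => (hint2 k).const_mul (v k)]
      simp only [integral_const_mul]
      refine Finset.sum_eq_zero fun k _ => ?_
      rw [hIk' k, mul_zero]
    have hh0 : h =ᵐ[P] 0 := by
      have h6 := (integral_eq_zero_iff_of_nonneg
        (fun ω => mul_self_nonneg (h ω)) hinthh).mp hhh
      filter_upwards [h6] with ω hω
      exact mul_self_eq_zero.mp hω
    exact hv.trans hh0
  -- Step C/D: vanishing of the conditional expectation given `Y`
  have hcondY : ∀ u : H, (∀ j, ⟪u, ΓX (a j)⟫ = 0) →
      (fun ω => ⟪u, (P[X | MeasurableSpace.comap Y inferInstance]) ω⟫)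
        =ᵐ[P] fun _ => (0 : ℝ) := by
    intro u hu
    have hgc := aux_condexp_inner hmY hXint u
    have hzero : (fun _ : Ω => (0 : ℝ)) =ᵐ[P]
        P[(fun ω => ⟪u, X ω⟫) | MeasurableSpace.comap Y inferInstance] := by
      refine ae_eq_condExp_of_forall_setIntegral_eq hmY (hg_int u)
        (fun s _ _ => (integrable_const (0 : ℝ)).integrableOn)
        (fun s hs _ => ?_) stronglyMeasurable_const.aestronglyMeasurable
      obtain ⟨B, hB, rfl⟩ := hs
      have hmain : ∫ ω in Y ⁻¹' B, ⟪u, X ω⟫ ∂P = 0 := by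
        have hpre : MeasurableSet (Y ⁻¹' B) := hYmeas hB
        set k : E × H → ℝ := fun p =>
          Set.indicator B (fun _ => (1 : ℝ)) (f ((fun j => ⟪p.2, a j⟫), p.1)) * ⟪u, p.2⟫
          with hkdef
        have h1 : ∫ ω in Y ⁻¹' B, ⟪u, X ω⟫ ∂P = ∫ ω, k (ε ω, X ω) ∂P := by
          rw [← integral_indicator hpre]
          congr 1
          funext ω
          have hYω : f ((fun j => ⟪X ω, a j⟫), ε ω) = Y ω := by rw [hY ω, hA ω]
          by_cases hω : Y ω ∈ B
          · rw [Set.indicator_of_mem (show ω ∈ Y ⁻¹' B from hω)]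
            simp only [hkdef]
            rw [hYω, Set.indicator_of_mem hω, one_mul]
          · rw [Set.indicator_of_notMem (show ω ∉ Y ⁻¹' B from hω)]
            simp only [hkdef]
            rw [hYω, Set.indicator_of_notMem hω, zero_mul]
        have hkmeas : Measurable k := by
          have h2 : Measurable fun p : E × H => f ((fun j => ⟪p.2, a j⟫), p.1) :=
            hf.comp ((measurable_pi_lambda _ fun j =>
              measurable_snd.inner measurable_const).prodMk measurable_fst)
          exact ((measurable_const.indicator hB).comp h2).mul
            (measurable_const.inner measurable_snd)
        have hmap : P.map (fun ω => (ε ω, X ω)) = (P.map ε).prod (P.map X) :=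
          (indepFun_iff_map_prod_eq_prod_map_map hεmeas.aemeasurable
            hXmeas.aemeasurable).mp hindep
        haveI h7 : IsProbabilityMeasure (P.map ε) :=
          Measure.isProbabilityMeasure_map hεmeas.aemeasurable
        haveI h8 : IsProbabilityMeasure (P.map X) :=
          Measure.isProbabilityMeasure_map hXmeas.aemeasurable
        have hbig : Integrable (fun p : E × H => ‖u‖ * (1 + ‖p.2‖) ^ 2)
            ((P.map ε).prod (P.map X)) := by
          rw [← hmap]
          refine (integrable_map_measure
            (measurable_const.mul ((measurable_const.add
              (measurable_norm.comp measurable_snd)).pow_const 2)).aestronglyMeasurable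
            (hεmeas.aemeasurable.prodMk hXmeas.aemeasurable)).mpr ?_
          exact hM.const_mul ‖u‖
        have hkbound : ∀ p : E × H, ‖k p‖ ≤ ‖u‖ * (1 + ‖p.2‖) ^ 2 := by
          intro p
          rw [hkdef]
          simp only [Real.norm_eq_abs, abs_mul]
          have h3 : |Set.indicator B (fun _ => (1 : ℝ)) (f ((fun j => ⟪p.2, a j⟫), p.1))|
              ≤ 1 := by
            by_cases hq : f ((fun j => ⟪p.2, a j⟫), p.1) ∈ B
            · rw [Set.indicator_of_mem hq]; simp
            · rw [Set.indicator_of_notMem hq]; simp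
          calc |Set.indicator B (fun _ => (1 : ℝ)) (f ((fun j => ⟪p.2, a j⟫), p.1))|
                * |⟪u, p.2⟫| ≤ 1 * (‖u‖ * ‖p.2‖) :=
                mul_le_mul h3 (abs_real_inner_le_norm _ _) (abs_nonneg _) zero_le_one
            _ = ‖u‖ * ‖p.2‖ := one_mul _
            _ ≤ ‖u‖ * (1 + ‖p.2‖) ^ 2 := by
                refine mul_le_mul_of_nonneg_left ?_ (norm_nonneg u)
                nlinarith [norm_nonneg p.2]
        have hkint : Integrable k ((P.map ε).prod (P.map X)) :=
          hbig.mono' hkmeas.aestronglyMeasurable (ae_of_all _ hkbound)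
        have h4 : ∫ ω, k (ε ω, X ω) ∂P = ∫ p, k p ∂((P.map ε).prod (P.map X)) := by
          rw [← hmap, integral_map (hεmeas.aemeasurable.prodMk hXmeas.aemeasurable)
            hkmeas.aestronglyMeasurable]
        have h6 : ∀ e : E, ∫ x, k (e, x) ∂(P.map X) = 0 := by
          intro e
          have h7 : ∫ x, k (e, x) ∂(P.map X) = ∫ ω, k (e, X ω) ∂P :=
            integral_map hXmeas.aemeasurable
              ((hkmeas.comp measurable_prodMk_left).aestronglyMeasurable)
          rw [h7]
          set ψ : Ω → ℝ := fun ω =>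
            Set.indicator B (fun _ => (1 : ℝ)) (f (A ω, e)) with hψdef
          have hψm : StronglyMeasurable[MeasurableSpace.comap A inferInstance] ψ := by
            have h9 : Measurable fun r : Fin q → ℝ =>
                Set.indicator B (fun _ => (1 : ℝ)) (f (r, e)) :=
              (measurable_const.indicator hB).comp
                (hf.comp (measurable_id.prodMk measurable_const))
            exact (h9.comp (measurable_iff_comap_le.mpr le_rfl)).stronglyMeasurable
          have heq : (fun ω => k (e, X ω)) = fun ω => ψ ω * ⟪u, X ω⟫ := by
            funext ω
            rw [hkdef, hψdef]
            simp only
            rw [hA ω]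
          rw [heq]
          have hψbd : ∀ ω, |ψ ω| ≤ 1 := by
            intro ω
            rw [hψdef]
            by_cases hq : f (A ω, e) ∈ B
            · simp only
              rw [Set.indicator_of_mem hq]; simp
            · simp only
              rw [Set.indicator_of_notMem hq]; simp
          have hψg_int : Integrable (ψ * fun ω => ⟪u, X ω⟫) P := by
            refine (hg_int u).mono ?_ (ae_of_all _ fun ω => ?_)
            · exact ((measurable_const.indicator hB).comp
                (hf.comp (hAmeas.prodMk measurable_const))).aestronglyMeasurable.mul
                (measurable_const.inner hXmeas).aestronglyMeasurable
            · simp only [Pi.mul_apply, Real.norm_eq_abs, abs_mul]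
              calc |ψ ω| * |⟪u, X ω⟫| ≤ 1 * |⟪u, X ω⟫| :=
                    mul_le_mul_of_nonneg_right (hψbd ω) (abs_nonneg _)
                _ = |⟪u, X ω⟫| := one_mul _
          have h10 := aux_integral_mul_condexp hmA hψm (hg_int u) hψg_int
          have h11 : ∫ ω, ψ ω
              * (P[(fun ω => ⟪u, X ω⟫) | MeasurableSpace.comap A inferInstance]) ω ∂P
              = 0 := by
            have h12 : (fun ω => ψ ω
                * (P[(fun ω => ⟪u, X ω⟫) | MeasurableSpace.comap A inferInstance]) ω)
                =ᵐ[P] fun _ => (0 : ℝ) := by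
              filter_upwards [hcondA u hu] with ω hω
              rw [hω]
              simp
            rw [integral_congr_ae h12, integral_zero]
          rw [h10, h11]
        rw [h1, h4, integral_prod k hkint]
        simp only [h6]
        simp
      rw [hmain]
      simp
    exact hgc.trans hzero.symm
  -- Step E: conclude via a countable dense subset of the orthogonal complement
  set S : Submodule ℝ H := Submodule.span ℝ (Set.range fun j => ΓX (a j)) with hSdef
  haveI : FiniteDimensional ℝ S := FiniteDimensional.span_of_finite ℝ (Set.finite_range _)
  obtain ⟨c, hc_count, hc_dense⟩ := TopologicalSpace.exists_countable_dense (↥Sᗮ)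
  have hDcount : (Subtype.val '' c : Set H).Countable := hc_count.image _
  have horth : ∀ u ∈ Sᗮ, ∀ j, ⟪u, ΓX (a j)⟫ = 0 := by
    intro u hu j
    have h := (Submodule.mem_orthogonal S u).mp hu (ΓX (a j))
      (Submodule.subset_span ⟨j, rfl⟩)
    rw [real_inner_comm]
    exact h
  have hae : ∀ᵐ ω ∂P, ∀ u ∈ Subtype.val '' c,
      ⟪u, (P[X | MeasurableSpace.comap Y inferInstance]) ω⟫ = 0 := by
    rw [ae_ball_iff hDcount]
    rintro u ⟨w, hw, rfl⟩
    filter_upwards [hcondY w.1 (horth w.1 w.2)] with ω hω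
    exact hω
  filter_upwards [hae] with ω hω
  set G : H := (P[X | MeasurableSpace.comap Y inferInstance]) ω with hGdef
  have hcl : IsClosed {w : H | ⟪w, G⟫ = 0} :=
    isClosed_eq (continuous_id.inner continuous_const) continuous_const
  have hsub : (Sᗮ : Set H) ⊆ {w : H | ⟪w, G⟫ = 0} := by
    intro w hw
    have hwc : w ∈ closure (Subtype.val '' c) :=
      map_mem_closure continuous_subtype_val (hc_dense ⟨w, hw⟩)
        (fun x hx => Set.mem_image_of_mem _ hx)
    exact (hcl.closure_subset_iff.mpr (fun x hx => hω x hx)) hwc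
  have hmem : G ∈ Sᗮᗮ := (Submodule.mem_orthogonal Sᗮ G).mpr fun w hw => hsub hw
  rwa [Submodule.orthogonal_orthogonal] at hmem
end

section
/- Consistency of the SIR neural network weights: in the perceptron setting, assume (A7) ζ(z,·) is continuous on W for every z ∈ O; (A8) there is a measurable ζ̃ : O → ℝ with |ζ(z,w)| ≤ ζ̃(z) for all z ∈ O, w ∈ W, and E[ζ̃(Z)] < ∞; (A9) for every w ∈ W there is C(w) > 0 with |ζ((x,y),w) − ζ((x',y),w)| ≤ C(w)‖x − x'‖ for all (x,y),(x',y) ∈ O, and sup_{w∈W} C(w) < ∞; (A10) ζ(·,w) is measurable for every w ∈ W. Assume moreover that the random estimates a_j^N ∈ H satisfy, for each j = 1,…,q, ⟨Γ_X(a_j^N − a_j), a_j^N − a_j⟩ →_p 0 and ⟨Γ̂_N(a_j^N − a_j), a_j^N − a_j⟩ →_p 0, where Γ̂_N u = (1/N)Σ_{n≤N}⟨u,Xⁿ⟩Xⁿ. Let W* be the set of minimizers over W of w ↦ E[ζ(Z,w)], and let w*_N be measurable random elements of W minimizing w ↦ Σ_{n≤N} ζ(Z̃_N^n, w) over W. Then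 d(w*_N, W*) →_p 0 as N → ∞, where d(w,𝒲) = inf_{w̃∈𝒲}‖w − w̃‖. -/
open MeasureTheory ProbabilityTheory
open scoped RealInnerProductSpace

open Filter Metric Set
open scoped Topology

section Envelope

variable {β Γ : Type*} [MeasurableSpace β] [MetricSpace Γ]

lemma mem_closure_inter_open {D U : Set Γ} {x : Γ} (hx : x ∈ closure D)
    (hU : IsOpen U) (hxU : x ∈ U) : x ∈ closure (D ∩ U) := by
  rw [_root_.mem_closure_iff] at hx ⊢
  intro o ho hxo
  rcases hx (o ∩ U) (ho.inter hU) ⟨hxo, hxU⟩ with ⟨y, ⟨hyo, hyU⟩, hyD⟩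
  exact ⟨y, hyo, hyD, hyU⟩

lemma exists_envelope (K D : Set Γ) (hDK : D ⊆ K) (hDc : D.Countable)
    (hDd : ∀ w ∈ K, w ∈ closure D)
    (f : β → Γ → ℝ) (h : β → ℝ)
    (hfmeas : ∀ w ∈ K, Measurable (fun b => f b w))
    (hfcont : ∀ b, ContinuousOn (f b) K)
    (hfbd : ∀ b, ∀ w ∈ K, |f b w| ≤ h b)
    (w₀ : Γ) (hw₀ : w₀ ∈ K) (δ : ℝ) (hδ : 0 < δ) :
    ∃ s : β → ℝ, Measurable s ∧ (∀ b, |s b| ≤ h b) ∧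
      (∀ b, ∀ w ∈ K ∩ Metric.ball w₀ δ, f b w ≤ s b) ∧
      (∀ b c, (∀ w ∈ K ∩ Metric.ball w₀ δ, f b w ≤ c) → s b ≤ c) := by
  -- D ∩ ball is nonempty
  have hne : (D ∩ Metric.ball w₀ δ).Nonempty := by
    rcases (_root_.mem_closure_iff.1 (hDd w₀ hw₀)) (Metric.ball w₀ δ) Metric.isOpen_ball
      (Metric.mem_ball_self hδ) with ⟨y, hy, hyD⟩
    exact ⟨y, hyD, hy⟩
  obtain ⟨e, he⟩ := Set.Countable.exists_eq_range (hDc.mono inter_subset_left) hne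
  have heK : ∀ n, e n ∈ K ∩ Metric.ball w₀ δ := by
    intro n
    have : e n ∈ D ∩ Metric.ball w₀ δ := by rw [he]; exact mem_range_self n
    exact ⟨hDK this.1, this.2⟩
  -- finite maxima
  set M : ℕ → β → ℝ := fun n => Nat.rec (fun b => f b (e 0))
    (fun n Mn b => max (Mn b) (f b (e (n + 1)))) n with hM
  have hMsucc : ∀ n b, M (n + 1) b = max (M n b) (f b (e (n + 1))) := fun n b => rfl
  have hMmeas : ∀ n, Measurable (M n) := by
    intro n; induction n with
    | zero => exact hfmeas _ (heK 0).1
    | succ n ih => exact Measurable.max ih (hfmeas _ (heK (n + 1)).1)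
  have hMbd : ∀ n b, |M n b| ≤ h b := by
    intro n b; induction n with
    | zero => exact hfbd b _ (heK 0).1
    | succ n ih =>
      rw [hMsucc, abs_le]
      have h2 := hfbd b _ (heK (n + 1)).1
      rw [abs_le] at ih h2
      constructor
      · exact le_max_of_le_left ih.1
      · exact max_le ih.2 h2.2
  have hMmono : ∀ b, Monotone fun n => M n b := fun b =>
    monotone_nat_of_le_succ (fun n => by rw [hMsucc]; exact le_max_left _ _)
  have hMle : ∀ n b, f b (e n) ≤ M n b := by
    intro n b
    cases n with
    | zero => exact le_rfl
    | succ n => rw [hMsucc]; exact le_max_right _ _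
  have hbdd : ∀ b, BddAbove (range fun n => M n b) := by
    intro b
    exact ⟨h b, by rintro x ⟨n, rfl⟩; exact (abs_le.1 (hMbd n b)).2⟩
  refine ⟨fun b => ⨆ n, M n b, ?_, ?_, ?_, ?_⟩
  · -- measurable as pointwise limit
    have hlim : ∀ b, Tendsto (fun n => M n b) atTop (𝓝 (⨆ n, M n b)) := fun b =>
      tendsto_atTop_ciSup (hMmono b) (hbdd b)
    exact measurable_of_tendsto_metrizable hMmeas
      (tendsto_pi_nhds.2 fun b => hlim b)
  · intro b
    rw [abs_le]
    constructor
    · exact le_trans (abs_le.1 (hMbd 0 b)).1 (le_ciSup (hbdd b) 0)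
    · exact ciSup_le fun n => (abs_le.1 (hMbd n b)).2
  · -- domination on K ∩ ball
    intro b w hw
    have hwcl : w ∈ closure (D ∩ Metric.ball w₀ δ) :=
      mem_closure_inter_open (hDd w hw.1) Metric.isOpen_ball hw.2
    rcases mem_closure_iff_seq_limit.1 hwcl with ⟨u, huD, hulim⟩
    have hval : ∀ n, f b (u n) ≤ ⨆ n, M n b := by
      intro n
      have : u n ∈ range e := by rw [← he]; exact huD n
      rcases this with ⟨k, hk⟩
      rw [← hk]
      exact le_trans (hMle k b) (le_ciSup (hbdd b) k)
    have htend : Tendsto (fun n => f b (u n)) atTop (𝓝 (f b w)) := by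
      have h1 : Tendsto u atTop (𝓝[K] w) :=
        tendsto_nhdsWithin_of_tendsto_nhds_of_eventually_within u hulim
          (Eventually.of_forall fun n => hDK (huD n).1)
      exact (hfcont b w hw.1).tendsto.comp h1
    exact le_of_tendsto htend (Eventually.of_forall hval)
  · intro b c hc
    refine ciSup_le fun n => ?_
    induction n with
    | zero => exact hc _ (heK 0)
    | succ n ih => rw [hMsucc]; exact max_le ih (hc _ (heK (n + 1)))

end Envelope
section ULLN

variable {Ω : Type*} [MeasurableSpace Ω] {β Γ : Type*} [MeasurableSpace β]
  [MetricSpace Γ] [SecondCountableTopology Γ]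

lemma ulln_onesided (P : Measure Ω) [IsProbabilityMeasure P]
    (K : Set Γ) (hK : IsCompact K)
    (f : β → Γ → ℝ) (h : β → ℝ)
    (hfmeas : ∀ w ∈ K, Measurable (fun b => f b w))
    (hfcont : ∀ b, ContinuousOn (f b) K)
    (hfbd : ∀ b, ∀ w ∈ K, |f b w| ≤ h b)
    (hhmeas : Measurable h)
    (V₀ : Ω → β) (hV₀ : Measurable V₀) (V : ℕ → Ω → β) (hV : ∀ n, Measurable (V n))
    (hindep : Pairwise fun i j => IndepFun (V i) (V j) P)
    (hid : ∀ n, IdentDistrib (V n) V₀ P P)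
    (hinth : Integrable (fun ω => h (V₀ ω)) P)
    (R : Γ → ℝ) (hR : ∀ w, R w = ∫ ω, f (V₀ ω) w ∂P) (hRcont : ContinuousOn R K)
    (α : ℝ) (hα : 0 < α) :
    Tendsto (fun N : ℕ => P {ω | ∃ w ∈ K,
        R w + α ≤ (N : ℝ)⁻¹ * ∑ n ∈ Finset.range N, f (V n ω) w})
      atTop (𝓝 0) := by
  classical
  rcases K.eq_empty_or_nonempty with hKe | hKne
  · simp only [hKe, mem_empty_iff_false, false_and, exists_false, exists_prop,
      setOf_false, measure_empty]
    exact tendsto_const_nhds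
  -- countable dense subset of K
  obtain ⟨t, htc, htd⟩ := TopologicalSpace.exists_countable_dense (↥K)
  set D : Set Γ := Subtype.val '' t with hD
  have hDK : D ⊆ K := by rintro x ⟨y, hy, rfl⟩; exact y.2
  have hDc : D.Countable := htc.image _
  have hDd : ∀ w ∈ K, w ∈ closure D := by
    intro w hw
    have h1 : (⟨w, hw⟩ : ↥K) ∈ closure t := htd.closure_eq ▸ mem_univ _
    have h2 : w ∈ Subtype.val '' closure t := ⟨⟨w, hw⟩, h1, rfl⟩
    exact (image_closure_subset_closure_image continuous_subtype_val) h2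
  -- local envelopes with good radius at every point of K
  have key : ∀ w₀ ∈ K, ∃ r : ℝ, 0 < r ∧ ∃ s : β → ℝ, Measurable s ∧
      (∀ b, |s b| ≤ h b) ∧ (∀ b, ∀ w ∈ K ∩ Metric.ball w₀ r, f b w ≤ s b) ∧
      (∫ ω, s (V₀ ω) ∂P) ≤ R w₀ + α / 4 ∧
      (∀ w ∈ K ∩ Metric.ball w₀ r, R w₀ ≤ R w + α / 4) := by
    intro w₀ hw₀
    have hex : ∀ k : ℕ, ∃ s : β → ℝ, Measurable s ∧ (∀ b, |s b| ≤ h b) ∧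
        (∀ b, ∀ w ∈ K ∩ Metric.ball w₀ (1 / (k + 1)), f b w ≤ s b) ∧
        (∀ b c, (∀ w ∈ K ∩ Metric.ball w₀ (1 / (k + 1)), f b w ≤ c) → s b ≤ c) :=
      fun k => exists_envelope K D hDK hDc hDd f h hfmeas hfcont hfbd w₀ hw₀ _
        (by positivity)
    choose s hsmeas hsbd hsdom hsle using hex
    -- pointwise convergence of the envelopes
    have hconv : ∀ b, Tendsto (fun k => s k b) atTop (𝓝 (f b w₀)) := by
      intro b
      rw [Metric.tendsto_atTop]
      intro γ hγ
      have hcw : ContinuousWithinAt (f b) K w₀ := hfcont b w₀ hw₀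
      rw [Metric.continuousWithinAt_iff] at hcw
      rcases hcw (γ / 2) (by positivity) with ⟨ρ, hρ, hball⟩
      rcases (tendsto_one_div_add_atTop_nhds_zero_nat.eventually
        (eventually_lt_nhds hρ)).exists with ⟨k₀, hk₀⟩
      have hmono : ∀ k ≥ k₀, (1 : ℝ) / (k + 1) ≤ 1 / (k₀ + 1) := by
        intro k hk
        apply one_div_le_one_div_of_le (by positivity)
        have : (k₀ : ℝ) ≤ (k : ℝ) := Nat.cast_le.2 hk
        linarith
      refine ⟨k₀, fun k hk => ?_⟩
      have hlow : f b w₀ ≤ s k b :=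
        hsdom k b w₀ ⟨hw₀, Metric.mem_ball_self (by positivity)⟩
      have hup : s k b ≤ f b w₀ + γ / 2 := by
        apply hsle k b
        intro w hw
        have hdist : dist w w₀ < ρ := lt_of_lt_of_le hw.2 (le_trans (hmono k hk) hk₀.le)
        have := hball hw.1 hdist
        rw [Real.dist_eq] at this
        linarith [(abs_lt.1 this).2]
      rw [Real.dist_eq, abs_lt]
      constructor <;> linarith
    -- dominated convergence for the integrals of the envelopes
    have hdct : Tendsto (fun k => ∫ ω, s k (V₀ ω) ∂P) atTop (𝓝 (R w₀)) := by
      rw [hR w₀]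
      apply tendsto_integral_of_dominated_convergence (fun ω => h (V₀ ω))
        (fun k => ((hsmeas k).comp hV₀).aestronglyMeasurable) hinth
      · intro k
        exact Eventually.of_forall fun ω => by
          rw [Real.norm_eq_abs]; exact hsbd k (V₀ ω)
      · exact Eventually.of_forall fun ω => hconv (V₀ ω)
    have hev : ∀ᶠ k in atTop, (∫ ω, s k (V₀ ω) ∂P) < R w₀ + α / 4 :=
      hdct.eventually (eventually_lt_nhds (by linarith))
    rcases hev.exists with ⟨k, hk⟩
    have hRc : ContinuousWithinAt R K w₀ := hRcont w₀ hw₀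
    rw [Metric.continuousWithinAt_iff] at hRc
    rcases hRc (α / 4) (by linarith) with ⟨ρ, hρ, hballR⟩
    refine ⟨min (1 / (k + 1)) ρ, lt_min (by positivity) hρ, s k, hsmeas k, hsbd k,
      ?_, hk.le, ?_⟩
    · intro b w hw
      exact hsdom k b w ⟨hw.1, Metric.mem_ball.2
        (lt_of_lt_of_le (Metric.mem_ball.1 hw.2) (min_le_left _ _))⟩
    · intro w hw
      have := hballR hw.1 (lt_of_lt_of_le (Metric.mem_ball.1 hw.2) (min_le_right _ _))
      rw [Real.dist_eq] at this
      linarith [(abs_lt.1 this).1]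
  choose! r hr s hsmeas hsbd hsdom hsint hsR using key
  -- finite subcover
  obtain ⟨T, hTK, hTcov⟩ := hK.elim_nhds_subcover (fun x => Metric.ball x (r x))
    (fun x hx => Metric.ball_mem_nhds x (hr x hx))
  set F : Γ → ℕ → Set Ω := fun i N => {ω | (∫ ω', s i (V₀ ω') ∂P) + α / 2 ≤
    (N : ℝ)⁻¹ * ∑ n ∈ Finset.range N, s i (V n ω)} with hF
  -- for each center, the SLLN kills the corresponding event
  have hcenter : ∀ i ∈ T, Tendsto (fun N : ℕ => P (F i N)) atTop (𝓝 0) := by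
    intro i hi
    have hiK : i ∈ K := hTK i hi
    set Ei : ℝ := ∫ ω', s i (V₀ ω') ∂P with hEi
    have hintn : ∀ n, Integrable (fun ω => s i (V n ω)) P := by
      intro n
      have h1 : Integrable (fun ω => h (V n ω)) P :=
        (((hid n).comp hhmeas).integrable_iff).2 hinth
      exact Integrable.mono' h1 ((hsmeas i hiK).comp (hV n)).aestronglyMeasurable
        (Eventually.of_forall fun ω => by rw [Real.norm_eq_abs]; exact hsbd i hiK _)
    have hslln := strong_law_ae (fun n ω => s i (V n ω)) (hintn 0)
      (fun m n hmn => ((hindep hmn).comp (hsmeas i hiK) (hsmeas i hiK)))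
      (fun n => ((hid n).comp (hsmeas i hiK)).trans ((hid 0).comp (hsmeas i hiK)).symm)
    have hE0 : (∫ ω, s i (V 0 ω) ∂P) = Ei := ((hid 0).comp (hsmeas i hiK)).integral_eq
    have htendae : ∀ᵐ ω ∂P, Tendsto (fun N : ℕ =>
        (N : ℝ)⁻¹ * ∑ n ∈ Finset.range N, s i (V n ω)) atTop (𝓝 Ei) := by
      filter_upwards [hslln] with ω hω
      have : P[fun ω => s i (V 0 ω)] = Ei := hE0
      rw [this] at hω
      simpa [smul_eq_mul] using hω
    have hinmeas : TendstoInMeasure P (fun (N : ℕ) (ω : Ω) =>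
        (N : ℝ)⁻¹ * ∑ n ∈ Finset.range N, s i (V n ω)) atTop (fun _ => Ei) :=
      tendstoInMeasure_of_tendsto_ae (fun N => (Measurable.aestronglyMeasurable (by
        exact Measurable.const_mul (Finset.measurable_sum _
          (fun n _ => (hsmeas i hiK).comp (hV n))) _))) htendae
    have hkey := hinmeas (ENNReal.ofReal (α / 2)) (by rw [ENNReal.ofReal_pos]; linarith)
    refine tendsto_of_tendsto_of_tendsto_of_le_of_le tendsto_const_nhds hkey
      (fun N => zero_le) (fun N => measure_mono ?_)
    intro ω hω
    simp only [hF, mem_setOf_eq] at hω ⊢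
    rw [edist_dist]; apply ENNReal.ofReal_le_ofReal; rw [Real.dist_eq]
    exact le_trans (by linarith) (le_abs_self _)
  -- event inclusion
  have hincl : ∀ N : ℕ, {ω | ∃ w ∈ K,
      R w + α ≤ (N : ℝ)⁻¹ * ∑ n ∈ Finset.range N, f (V n ω) w} ⊆ ⋃ i ∈ T, F i N := by
    intro N ω hω
    rcases hω with ⟨w, hwK, hwle⟩
    rcases mem_iUnion₂.1 (hTcov hwK) with ⟨i, hi, hwi⟩
    have hiK : i ∈ K := hTK i hi
    refine mem_iUnion₂.2 ⟨i, hi, ?_⟩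
    have h1 : (N : ℝ)⁻¹ * ∑ n ∈ Finset.range N, f (V n ω) w ≤
        (N : ℝ)⁻¹ * ∑ n ∈ Finset.range N, s i (V n ω) := by
      apply mul_le_mul_of_nonneg_left _ (by positivity)
      exact Finset.sum_le_sum fun n _ => hsdom i hiK (V n ω) w ⟨hwK, hwi⟩
    have h2 : (∫ ω', s i (V₀ ω') ∂P) ≤ R i + α / 4 := hsint i hiK
    have h3 : R i ≤ R w + α / 4 := hsR i hiK w ⟨hwK, hwi⟩
    simp only [hF, mem_setOf_eq]
    linarith
  -- conclude
  have hsum : Tendsto (fun N => ∑ i ∈ T, P (F i N)) atTop (𝓝 0) := by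
    have h1 := tendsto_finset_sum T fun i hi => hcenter i hi
    simpa using h1
  refine tendsto_of_tendsto_of_tendsto_of_le_of_le tendsto_const_nhds hsum
    (fun N => zero_le) (fun N => ?_)
  exact (measure_mono (hincl N)).trans (measure_biUnion_finset_le T _)

end ULLN

/-- The weight space of a one-hidden-layer perceptron with `q` inputs and `q₂` hidden
neurons: `w = ((wᵢ⁽²⁾)ᵢ, (wᵢⱼ⁽¹⁾)ᵢⱼ, (wᵢ⁽⁰⁾)ᵢ) ∈ ℝ^{(q+2)q₂}`. -/
abbrev PerceptronWeights (q q₂ : ℕ) : Type :=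
  (Fin q₂ → ℝ) × (Fin q₂ → Fin q → ℝ) × (Fin q₂ → ℝ)

/-- Consistency of the SIR neural network weights: in the perceptron
setting, under (A7)–(A10) and consistency of the estimated directions
`⟪Γ_X(a_j^N − a_j), a_j^N − a_j⟫ →_p 0` and `⟪Γ̂_N(a_j^N − a_j), a_j^N − a_j⟫ →_p 0`,
any measurable minimizers `w*_N` of the plug-in empirical risk satisfy
`d(w*_N, W*) →_p 0`, where `W*` is the set of minimizers of the theoretical risk. -/
theorem SIR_neural_network_weights_consistency
    {Ω : Type*} [MeasurableSpace Ω] (P : Measure Ω) [IsProbabilityMeasure P]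
    {H : Type*} [NormedAddCommGroup H] [InnerProductSpace ℝ H] [CompleteSpace H]
    [SecondCountableTopology H] [MeasurableSpace H] [BorelSpace H]
    {q q₂ : ℕ}
    -- the pair (X, Y) and its i.i.d. copies
    (X : Ω → H) (hXmeas : Measurable X) (hXcentered : ∫ ω, X ω ∂P = 0)
    (hX4 : Integrable (fun ω => ‖X ω‖ ^ 4) P)
    (Y : Ω → ℝ) (hYmeas : Measurable Y)
    (Xn : ℕ → Ω → H) (Yn : ℕ → Ω → ℝ)
    (hXnmeas : ∀ n, Measurable (Xn n)) (hYnmeas : ∀ n, Measurable (Yn n))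
    (hiid : iIndepFun (m := fun _ : ℕ => (inferInstance : MeasurableSpace (H × ℝ)))
      (fun n ω => (Xn n ω, Yn n ω)) P)
    (hident : ∀ n, Measure.map (fun ω => (Xn n ω, Yn n ω)) P
      = Measure.map (fun ω => (X ω, Y ω)) P)
    -- the (fixed) EDR directions and their random estimates
    (a : Fin q → H)
    (aN : ℕ → Fin q → Ω → H) (haNmeas : ∀ N j, Measurable (aN N j))
    -- the empirical second-moment operator Γ̂_N
    (ΓhatN : ℕ → Ω → H → H)
    (hΓhatN : ∀ (N : ℕ) (ω : Ω) (u : H),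
      ΓhatN N ω u = (N : ℝ)⁻¹ • ∑ n ∈ Finset.range N, ⟪u, Xn n ω⟫ • Xn n ω)
    -- consistency of the estimated projections
    (haNcons : ∀ j : Fin q, ∀ ε : ℝ, 0 < ε →
      Filter.Tendsto
        (fun N : ℕ => P {ω | ε < ⟪ΓhatN N ω (aN N j ω - a j), aN N j ω - a j⟫})
        Filter.atTop (nhds 0))
    -- the open set O, the compact set of weights W
    (O : Set (EuclideanSpace ℝ (Fin q) × ℝ)) (hO : IsOpen O)
    (W : Set (PerceptronWeights q q₂)) (hWne : W.Nonempty) (hWcpt : IsCompact W)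
    -- activation, loss and the induced criterion ζ
    (g : ℝ → ℝ) (L : ℝ → ℝ → ℝ)
    (ζ : EuclideanSpace ℝ (Fin q) × ℝ → PerceptronWeights q q₂ → ℝ)
    (hζ : ∀ (z : EuclideanSpace ℝ (Fin q) × ℝ) (w : PerceptronWeights q q₂),
      ζ z w = L (∑ i : Fin q₂, w.1 i * g ((∑ j : Fin q, w.2.1 i j * z.1 j) + w.2.2 i)) z.2)
    -- Z, Z_n and the plug-in Z̃_N^n, all with values in O
    (Z : Ω → EuclideanSpace ℝ (Fin q) × ℝ)
    (hZ : ∀ ω, Z ω = ((WithLp.toLp 2 (fun j => ⟪X ω, a j⟫) : EuclideanSpace ℝ (Fin q)), Y ω))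
    (hZO : ∀ ω, Z ω ∈ O)
    (hZnO : ∀ (n : ℕ) (ω : Ω),
      ((WithLp.toLp 2 (fun j => ⟪Xn n ω, a j⟫) : EuclideanSpace ℝ (Fin q)), Yn n ω) ∈ O)
    (Ztilde : ℕ → ℕ → Ω → EuclideanSpace ℝ (Fin q) × ℝ)
    (hZtilde : ∀ (N n : ℕ) (ω : Ω),
      Ztilde N n ω = ((WithLp.toLp 2 (fun j => ⟪Xn n ω, aN N j ω⟫) : EuclideanSpace ℝ (Fin q)), Yn n ω))
    (hZtildeO : ∀ (N n : ℕ) (ω : Ω), Ztilde N n ω ∈ O)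
    -- (A7): continuity in the weights
    (hA7 : ∀ z ∈ O, ContinuousOn (ζ z) W)
    -- (A8): domination by an integrable function
    (ζtilde : EuclideanSpace ℝ (Fin q) × ℝ → ℝ)
    (hζtmeas : Measurable fun z : O => ζtilde (z : EuclideanSpace ℝ (Fin q) × ℝ))
    (hdom : ∀ z ∈ O, ∀ w ∈ W, |ζ z w| ≤ ζtilde z)
    (hint : Integrable (fun ω => ζtilde (Z ω)) P)
    -- (A9): Lipschitz continuity in the first argument, uniformly over W
    (C : PerceptronWeights q q₂ → ℝ) (hCpos : ∀ w ∈ W, 0 < C w)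
    (hA9 : ∀ w ∈ W, ∀ (x x' : EuclideanSpace ℝ (Fin q)) (y : ℝ),
      (x, y) ∈ O → (x', y) ∈ O → |ζ (x, y) w - ζ (x', y) w| ≤ C w * ‖x - x'‖)
    (hCbdd : ∃ M : ℝ, ∀ w ∈ W, C w ≤ M)
    -- (A10): measurability in the first argument
    (hA10 : ∀ w ∈ W, Measurable fun z : O => ζ (z : EuclideanSpace ℝ (Fin q) × ℝ) w)
    -- the covariance operator of X and consistency of the estimated directions for it
    (ΓX : H →L[ℝ] H) (hΓX : ∀ u, ΓX u = ∫ ω, ⟪u, X ω⟫ • X ω ∂P)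
    (haNconsX : ∀ j : Fin q, ∀ ε : ℝ, 0 < ε →
      Filter.Tendsto
        (fun N : ℕ => P {ω | ε < ⟪ΓX (aN N j ω - a j), aN N j ω - a j⟫})
        Filter.atTop (nhds 0))
    -- the set of minimizers of the theoretical risk
    (Wstar : Set (PerceptronWeights q q₂))
    (hWstar : Wstar = {w ∈ W | ∀ w' ∈ W, ∫ ω, ζ (Z ω) w ∂P ≤ ∫ ω, ζ (Z ω) w' ∂P})
    -- measurable minimizers of the plug-in empirical risk
    (wN : ℕ → Ω → PerceptronWeights q q₂) (hwNmeas : ∀ N, Measurable (wN N))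
    (hwNmin : ∀ (N : ℕ) (ω : Ω), wN N ω ∈ W ∧
      ∀ w ∈ W, ∑ n ∈ Finset.range N, ζ (Ztilde N n ω) (wN N ω)
        ≤ ∑ n ∈ Finset.range N, ζ (Ztilde N n ω) w) :
    ∀ ε : ℝ, 0 < ε →
      Filter.Tendsto (fun N : ℕ => P {ω | ε < Metric.infDist (wN N ω) Wstar})
        Filter.atTop (nhds 0) := by
  classical
  intro ε hε
  -- Ω is nonempty
  have hΩne : Nonempty Ω := by
    by_contra hc
    rw [not_nonempty_iff] at hc
    have h1 : P Set.univ = 1 := measure_univ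
    rw [Set.univ_eq_empty_iff.mpr hc, measure_empty] at h1
    exact zero_ne_one h1
  obtain ⟨ω₀⟩ := hΩne
  -- the coordinate map and the O-valued random elements
  set coords : H × ℝ → EuclideanSpace ℝ (Fin q) × ℝ :=
    fun p => ((WithLp.toLp 2 (fun j => ⟪p.1, a j⟫) : EuclideanSpace ℝ (Fin q)), p.2) with hcoords
  have hcoordsmeas : Measurable coords := by
    apply Measurable.prodMk
    · exact Measurable.comp (WithLp.measurable_toLp 2 (Fin q → ℝ)) (measurable_pi_lambda _ fun j =>
        ((continuous_fst.inner continuous_const).measurable))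
    · exact measurable_snd
  set z₀ : ↥O := ⟨Z ω₀, hZO ω₀⟩ with hz₀
  set φ : H × ℝ → ↥O := fun p =>
    ⟨if coords p ∈ O then coords p else z₀.val, by
      split_ifs with hmem
      · exact hmem
      · exact z₀.2⟩ with hφ
  have hφmeas : Measurable φ := by
    apply Measurable.subtype_mk
    exact Measurable.ite (hcoordsmeas hO.measurableSet) hcoordsmeas measurable_const
  have hZmeas : Measurable Z := by
    have hZeq : Z = fun ω => coords (X ω, Y ω) := funext fun ω => by rw [hZ]
    rw [hZeq]
    exact hcoordsmeas.comp (hXmeas.prodMk hYmeas)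
  set V₀ : Ω → ↥O := fun ω => ⟨Z ω, hZO ω⟩ with hV₀
  set V : ℕ → Ω → ↥O := fun n ω =>
    ⟨((WithLp.toLp 2 (fun j => ⟪Xn n ω, a j⟫) : EuclideanSpace ℝ (Fin q)), Yn n ω), hZnO n ω⟩ with hVdef
  have hV₀meas : Measurable V₀ := hZmeas.subtype_mk
  have hV₀eq : V₀ = fun ω => φ (X ω, Y ω) := by
    funext ω
    apply Subtype.ext
    show Z ω = if coords (X ω, Y ω) ∈ O then coords (X ω, Y ω) else z₀.val
    have hcz : coords (X ω, Y ω) = Z ω := (hZ ω).symm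
    rw [hcz, if_pos (hZO ω)]
  have hVeq : ∀ n, V n = fun ω => φ (Xn n ω, Yn n ω) := by
    intro n
    funext ω
    apply Subtype.ext
    show _ = if coords (Xn n ω, Yn n ω) ∈ O then coords (Xn n ω, Yn n ω) else z₀.val
    exact (if_pos (hZnO n ω)).symm
  have hVmeas : ∀ n, Measurable (V n) := by
    intro n
    rw [hVeq n]
    exact hφmeas.comp ((hXnmeas n).prodMk (hYnmeas n))
  have hindep : Pairwise fun i j => IndepFun (V i) (V j) P := by
    intro i j hij
    rw [hVeq i, hVeq j]
    exact (hiid.indepFun hij).comp hφmeas hφmeas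
  have hid : ∀ n, IdentDistrib (V n) V₀ P P := by
    intro n
    rw [hVeq n, hV₀eq]
    have hpair : IdentDistrib (fun ω => (Xn n ω, Yn n ω)) (fun ω => (X ω, Y ω)) P P :=
      ⟨((hXnmeas n).prodMk (hYnmeas n)).aemeasurable,
        (hXmeas.prodMk hYmeas).aemeasurable, hident n⟩
    exact hpair.comp hφmeas
  -- the criterion and its envelope, as functions on ↥O
  set f₁ : ↥O → PerceptronWeights q q₂ → ℝ := fun z w => ζ z.val w with hf₁
  set f₂ : ↥O → PerceptronWeights q q₂ → ℝ := fun z w => -ζ z.val w with hf₂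
  set henv : ↥O → ℝ := fun z => ζtilde z.val with hhenv
  -- the theoretical risk
  set R : PerceptronWeights q q₂ → ℝ := fun w => ∫ ω, ζ (Z ω) w ∂P with hRdef
  have hRcont : ContinuousOn R W := by
    intro w₀ hw₀
    have key : Filter.Tendsto (fun w => ∫ ω, ζ (Z ω) w ∂P) (nhdsWithin w₀ W)
        (𝓝 (∫ ω, ζ (Z ω) w₀ ∂P)) := by
      apply tendsto_integral_filter_of_dominated_convergence (fun ω => ζtilde (Z ω))
      · filter_upwards [self_mem_nhdsWithin] with w hw
        exact ((hA10 w hw).comp hV₀meas).aestronglyMeasurable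
      · filter_upwards [self_mem_nhdsWithin] with w hw
        exact Eventually.of_forall fun ω => by
          rw [Real.norm_eq_abs]; exact hdom (Z ω) (hZO ω) w hw
      · exact hint
      · exact Eventually.of_forall fun ω => hA7 (Z ω) (hZO ω) w₀ hw₀
    exact key
  -- a minimizer of the theoretical risk
  obtain ⟨wstar, hwstarW, hwstarmin⟩ := hWcpt.exists_isMinOn hWne hRcont
  have hwstarmin' : ∀ w' ∈ W, R wstar ≤ R w' := fun w' hw' => hwstarmin hw'
  have hwstarWstar : wstar ∈ Wstar := by
    rw [hWstar]; exact ⟨hwstarW, fun w' hw' => hwstarmin' w' hw'⟩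
  -- the compact set of ε-far points and the gap α
  set Kc : Set (PerceptronWeights q q₂) := W ∩ {w | ε ≤ Metric.infDist w Wstar} with hKc
  have hKccpt : IsCompact Kc := hWcpt.inter_right
    (isClosed_le continuous_const (Metric.continuous_infDist_pt Wstar))
  rcases Kc.eq_empty_or_nonempty with hKce | hKcne
  · -- trivial case : all of W is ε-close to Wstar
    have hempty : ∀ N : ℕ, {ω | ε < Metric.infDist (wN N ω) Wstar} = ∅ := by
      intro N
      rw [Set.eq_empty_iff_forall_notMem]
      intro ω hω
      have hω' : ε < Metric.infDist (wN N ω) Wstar := hω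
      have hmem : wN N ω ∈ Kc := ⟨(hwNmin N ω).1, le_of_lt hω'⟩
      rw [hKce] at hmem
      exact hmem
    have heq : (fun N : ℕ => P {ω | ε < Metric.infDist (wN N ω) Wstar}) = fun _ => 0 := by
      funext N; rw [hempty N, measure_empty]
    rw [heq]
    exact tendsto_const_nhds
  obtain ⟨w₁, hw₁Kc, hw₁min⟩ := hKccpt.exists_isMinOn hKcne
    (hRcont.mono (fun w hw => hw.1))
  set α : ℝ := R w₁ - R wstar with hαdef
  have hαpos : 0 < α := by
    rw [hαdef]
    have hle : R wstar ≤ R w₁ := hwstarmin' w₁ hw₁Kc.1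
    rcases lt_or_eq_of_le hle with hlt | heq
    · linarith
    · exfalso
      have hmem : w₁ ∈ Wstar := by
        rw [hWstar]
        refine ⟨hw₁Kc.1, fun w' hw' => ?_⟩
        show R w₁ ≤ R w'
        rw [← heq]
        exact hwstarmin' w' hw'
      have h0 : Metric.infDist w₁ Wstar = 0 := Metric.infDist_zero_of_mem hmem
      have := hw₁Kc.2
      rw [Set.mem_setOf_eq, h0] at this
      linarith
  -- the uniform bound on the Lipschitz constants
  obtain ⟨M, hM⟩ := hCbdd
  set M₀ : ℝ := max M 1 with hM₀def
  have hM₀pos : 0 < M₀ := lt_of_lt_of_le one_pos (le_max_right _ _)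
  have hCM₀ : ∀ w ∈ W, C w ≤ M₀ := fun w hw => le_trans (hM w hw) (le_max_left _ _)
  set c : ℝ := (α / (8 * M₀)) ^ 2 with hcdef
  have hcpos : 0 < c := by
    rw [hcdef]
    exact pow_pos (div_pos hαpos (by linarith)) 2
  -- the three sequences of bad events
  have hE₁ := ulln_onesided P W hWcpt f₁ henv
    (fun w hw => hA10 w hw) (fun b => hA7 b.val b.2)
    (fun b w hw => hdom b.val b.2 w hw) hζtmeas
    V₀ hV₀meas V hVmeas hindep hid hint R (fun w => rfl) hRcont (α / 4) (by linarith)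
  have hE₂ := ulln_onesided P W hWcpt f₂ henv
    (fun w hw => (hA10 w hw).neg) (fun b => (hA7 b.val b.2).neg)
    (fun b w hw => by rw [hf₂]; rw [abs_neg]; exact hdom b.val b.2 w hw) hζtmeas
    V₀ hV₀meas V hVmeas hindep hid hint (fun w => -R w)
    (fun w => by rw [hRdef]; simp only [hf₂]; rw [← integral_neg]) hRcont.neg
    (α / 4) (by linarith)
  set E₁ : ℕ → Set Ω := fun N => {ω | ∃ w ∈ W,
    R w + α / 4 ≤ (N : ℝ)⁻¹ * ∑ n ∈ Finset.range N, f₁ (V n ω) w} with hE₁def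
  set E₂ : ℕ → Set Ω := fun N => {ω | ∃ w ∈ W,
    -R w + α / 4 ≤ (N : ℝ)⁻¹ * ∑ n ∈ Finset.range N, f₂ (V n ω) w} with hE₂def
  set E₃ : ℕ → Set Ω := fun N => {ω | c ≤ ∑ j : Fin q,
    ⟪ΓhatN N ω (aN N j ω - a j), aN N j ω - a j⟫} with hE₃def
  have hE₃ : Filter.Tendsto (fun N => P (E₃ N)) Filter.atTop (𝓝 0) := by
    rcases Nat.eq_zero_or_pos q with hq | hq
    · have hempty : ∀ N, E₃ N = ∅ := by
        intro N
        rw [Set.eq_empty_iff_forall_notMem]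
        intro ω hω
        rw [hE₃def, Set.mem_setOf_eq] at hω
        subst hq
        simp only [Finset.univ_eq_empty, Finset.sum_empty] at hω
        linarith
      have heq : (fun N => P (E₃ N)) = fun _ => 0 := by
        funext N; rw [hempty N, measure_empty]
      rw [heq]; exact tendsto_const_nhds
    · have hqpos : (0 : ℝ) < q := by exact_mod_cast hq
      have hincl3 : ∀ N, E₃ N ⊆ ⋃ j : Fin q,
          {ω | c / (2 * q) < ⟪ΓhatN N ω (aN N j ω - a j), aN N j ω - a j⟫} := by
        intro N ω hω
        rw [hE₃def, Set.mem_setOf_eq] at hω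
        by_contra hc2
        simp only [Set.mem_iUnion, Set.mem_setOf_eq, not_exists, not_lt] at hc2
        have hsum : ∑ j : Fin q, ⟪ΓhatN N ω (aN N j ω - a j), aN N j ω - a j⟫
            ≤ ∑ _j : Fin q, c / (2 * q) := Finset.sum_le_sum fun j _ => hc2 j
        rw [Finset.sum_const, Finset.card_univ, Fintype.card_fin, nsmul_eq_mul] at hsum
        have : (q : ℝ) * (c / (2 * q)) = c / 2 := by field_simp
        rw [this] at hsum
        linarith
      have hsml : ∀ j : Fin q, Filter.Tendsto (fun N => P
          {ω | c / (2 * q) < ⟪ΓhatN N ω (aN N j ω - a j), aN N j ω - a j⟫})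
          Filter.atTop (𝓝 0) := fun j => haNcons j _ (div_pos hcpos (by linarith))
      have hsum0 : Filter.Tendsto (fun N => ∑ j : Fin q, P
          {ω | c / (2 * q) < ⟪ΓhatN N ω (aN N j ω - a j), aN N j ω - a j⟫})
          Filter.atTop (𝓝 0) := by
        have h1 := tendsto_finset_sum Finset.univ fun (j : Fin q) _ => hsml j
        simpa using h1
      refine tendsto_of_tendsto_of_tendsto_of_le_of_le tendsto_const_nhds hsum0
        (fun N => zero_le) (fun N => ?_)
      calc P (E₃ N) ≤ P (⋃ j : Fin q, _) := measure_mono (hincl3 N)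
        _ ≤ ∑' j : Fin q, P _ := measure_iUnion_le _
        _ = ∑ j : Fin q, P _ := tsum_fintype _
  -- the main inclusion, valid for N ≥ 1
  have hincl : ∀ N : ℕ, 1 ≤ N →
      {ω | ε < Metric.infDist (wN N ω) Wstar} ⊆ E₁ N ∪ E₂ N ∪ E₃ N := by
    intro N hN ω hω
    by_contra hmem
    simp only [Set.mem_union, not_or] at hmem
    obtain ⟨⟨h₁, h₂⟩, h₃⟩ := hmem
    simp only [hE₁def, Set.mem_setOf_eq] at h₁
    simp only [hE₂def, Set.mem_setOf_eq] at h₂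
    simp only [hE₃def, Set.mem_setOf_eq] at h₃
    push_neg at h₁ h₂ h₃
    have hω' : ε < Metric.infDist (wN N ω) Wstar := hω
    have hNpos : (0 : ℝ) < N := by exact_mod_cast hN
    have hNinvpos : (0 : ℝ) ≤ (N : ℝ)⁻¹ := by positivity
    -- notation
    set u : Fin q → H := fun j => aN N j ω - a j with hu
    set xs : ℕ → EuclideanSpace ℝ (Fin q) := fun n => WithLp.toLp 2 (fun j => ⟪Xn n ω, a j⟫) with hxs
    set xts : ℕ → EuclideanSpace ℝ (Fin q) := fun n => WithLp.toLp 2 (fun j => ⟪Xn n ω, aN N j ω⟫) with hxts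
    set Ahat : PerceptronWeights q q₂ → ℝ :=
      fun w => (N : ℝ)⁻¹ * ∑ n ∈ Finset.range N, ζ (xs n, Yn n ω) w with hAhat
    set Atil : PerceptronWeights q q₂ → ℝ :=
      fun w => (N : ℝ)⁻¹ * ∑ n ∈ Finset.range N, ζ (Ztilde N n ω) w with hAtil
    -- the minimizer is far, so its risk is large
    have hwbar : wN N ω ∈ Kc := ⟨(hwNmin N ω).1, le_of_lt hω'⟩
    have hRbar : R wstar + α ≤ R (wN N ω) := by
      have h1 : R w₁ ≤ R (wN N ω) := hw₁min hwbar
      rw [hαdef]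
      linarith
    -- h₁ at wstar : empirical risk at wstar close to theoretical
    have hAs : Ahat wstar < R wstar + α / 4 := h₁ wstar hwstarW
    -- h₂ at the empirical minimizer
    have hAb : R (wN N ω) - α / 4 < Ahat (wN N ω) := by
      have h2 := h₂ (wN N ω) (hwNmin N ω).1
      have hneg : (N : ℝ)⁻¹ * ∑ n ∈ Finset.range N, f₂ (V n ω) (wN N ω)
          = -Ahat (wN N ω) := by
        have hterm : ∀ n, f₂ (V n ω) (wN N ω) = -(ζ (xs n, Yn n ω) (wN N ω)) :=
          fun n => rfl
        rw [Finset.sum_congr rfl fun n _ => hterm n, Finset.sum_neg_distrib, mul_neg]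
      rw [hneg] at h2
      linarith
    -- control of the plug-in error
    have hQ : ∀ v : H, ⟪ΓhatN N ω v, v⟫
        = (N : ℝ)⁻¹ * ∑ n ∈ Finset.range N, ⟪v, Xn n ω⟫ ^ 2 := by
      intro v
      rw [hΓhatN N ω v, real_inner_smul_left, sum_inner]
      congr 1
      refine Finset.sum_congr rfl fun n _ => ?_
      rw [real_inner_smul_left, real_inner_comm (Xn n ω) v]
      ring
    have hdn : ∀ n, ‖xts n - xs n‖ ^ 2 = ∑ j : Fin q, ⟪u j, Xn n ω⟫ ^ 2 := by
      intro n
      rw [PiLp.norm_sq_eq_of_L2]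
      refine Finset.sum_congr rfl fun j _ => ?_
      have happ : (xts n - xs n) j = ⟪Xn n ω, aN N j ω⟫ - ⟪Xn n ω, a j⟫ := rfl
      rw [Real.norm_eq_abs, sq_abs, happ, hu]
      rw [← inner_sub_right, real_inner_comm]
    set B : ℝ := (N : ℝ)⁻¹ * ∑ n ∈ Finset.range N, ‖xts n - xs n‖ with hB
    have hBnonneg : 0 ≤ B := by
      rw [hB]
      exact mul_nonneg hNinvpos (Finset.sum_nonneg fun n _ => norm_nonneg _)
    have hQs : ∑ j : Fin q, ⟪ΓhatN N ω (u j), u j⟫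
        = (N : ℝ)⁻¹ * ∑ n ∈ Finset.range N, ‖xts n - xs n‖ ^ 2 := by
      calc ∑ j : Fin q, ⟪ΓhatN N ω (u j), u j⟫
          = ∑ j : Fin q, ((N : ℝ)⁻¹ * ∑ n ∈ Finset.range N, ⟪u j, Xn n ω⟫ ^ 2) :=
            Finset.sum_congr rfl fun j _ => hQ (u j)
        _ = (N : ℝ)⁻¹ * ∑ j : Fin q, ∑ n ∈ Finset.range N, ⟪u j, Xn n ω⟫ ^ 2 := by
            rw [Finset.mul_sum]
        _ = (N : ℝ)⁻¹ * ∑ n ∈ Finset.range N, ∑ j : Fin q, ⟪u j, Xn n ω⟫ ^ 2 := by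
            rw [Finset.sum_comm]
        _ = (N : ℝ)⁻¹ * ∑ n ∈ Finset.range N, ‖xts n - xs n‖ ^ 2 := by
            rw [Finset.sum_congr rfl fun n _ => (hdn n).symm]
    have hB2 : B ^ 2 ≤ ∑ j : Fin q, ⟪ΓhatN N ω (u j), u j⟫ := by
      rw [hQs, hB, mul_pow]
      have hcs : (∑ n ∈ Finset.range N, ‖xts n - xs n‖) ^ 2
          ≤ (N : ℝ) * ∑ n ∈ Finset.range N, ‖xts n - xs n‖ ^ 2 := by
        have := sq_sum_le_card_mul_sum_sq (s := Finset.range N)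
          (f := fun n => ‖xts n - xs n‖)
        rwa [Finset.card_range] at this
      have hNne : (N : ℝ) ≠ 0 := ne_of_gt hNpos
      calc ((N : ℝ)⁻¹) ^ 2 * (∑ n ∈ Finset.range N, ‖xts n - xs n‖) ^ 2
          ≤ ((N : ℝ)⁻¹) ^ 2 * ((N : ℝ) * ∑ n ∈ Finset.range N, ‖xts n - xs n‖ ^ 2) := by
            apply mul_le_mul_of_nonneg_left hcs (by positivity)
        _ = (N : ℝ)⁻¹ * ∑ n ∈ Finset.range N, ‖xts n - xs n‖ ^ 2 := by
            field_simp
    have hQlt : ∑ j : Fin q, ⟪ΓhatN N ω (u j), u j⟫ < c := h₃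
    have hMB : M₀ * B < α / 8 := by
      have hsq : (M₀ * B) ^ 2 < (α / 8) ^ 2 := by
        have h1 : (M₀ * B) ^ 2 = M₀ ^ 2 * B ^ 2 := by ring
        have h2 : M₀ ^ 2 * B ^ 2 < M₀ ^ 2 * c := by
          exact mul_lt_mul_of_pos_left (lt_of_le_of_lt hB2 hQlt) (pow_pos hM₀pos 2)
        have hM₀ne : M₀ ≠ 0 := ne_of_gt hM₀pos
        have h3 : M₀ ^ 2 * c = (α / 8) ^ 2 := by
          rw [hcdef]
          field_simp
        rw [h1]
        rw [h3] at h2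
        exact h2
      exact lt_of_pow_lt_pow_left₀ 2 (by linarith : (0:ℝ) ≤ α / 8) hsq
    -- plug-in versus true empirical risk
    have hdiff : ∀ w ∈ W, |Atil w - Ahat w| ≤ M₀ * B := by
      intro w hw
      have hterm : ∀ n, |ζ (Ztilde N n ω) w - ζ (xs n, Yn n ω) w|
          ≤ M₀ * ‖xts n - xs n‖ := by
        intro n
        have hmem1 : ((xts n : EuclideanSpace ℝ (Fin q)), Yn n ω) ∈ O := by
          have := hZtildeO N n ω
          rwa [hZtilde N n ω] at this
        have hmem2 : ((xs n : EuclideanSpace ℝ (Fin q)), Yn n ω) ∈ O := hZnO n ω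
        have h9 := hA9 w hw (xts n) (xs n) (Yn n ω) hmem1 hmem2
        have hC : C w * ‖xts n - xs n‖ ≤ M₀ * ‖xts n - xs n‖ :=
          mul_le_mul_of_nonneg_right (hCM₀ w hw) (norm_nonneg _)
        rw [hZtilde N n ω]
        exact le_trans h9 hC
      have hsub : Atil w - Ahat w = (N : ℝ)⁻¹ *
          ∑ n ∈ Finset.range N, (ζ (Ztilde N n ω) w - ζ (xs n, Yn n ω) w) := by
        rw [hAtil, hAhat, Finset.sum_sub_distrib, mul_sub]
      rw [hsub, abs_mul, abs_of_nonneg hNinvpos]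
      calc (N : ℝ)⁻¹ * |∑ n ∈ Finset.range N, (ζ (Ztilde N n ω) w - ζ (xs n, Yn n ω) w)|
          ≤ (N : ℝ)⁻¹ * ∑ n ∈ Finset.range N, |ζ (Ztilde N n ω) w - ζ (xs n, Yn n ω) w| :=
            mul_le_mul_of_nonneg_left (Finset.abs_sum_le_sum_abs _ _) hNinvpos
        _ ≤ (N : ℝ)⁻¹ * ∑ n ∈ Finset.range N, M₀ * ‖xts n - xs n‖ :=
            mul_le_mul_of_nonneg_left (Finset.sum_le_sum fun n _ => hterm n) hNinvpos
        _ = M₀ * B := by rw [hB, ← Finset.mul_sum]; ring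
    -- the contradiction
    have hd1 := abs_le.1 (hdiff (wN N ω) (hwNmin N ω).1)
    have hd2 := abs_le.1 (hdiff wstar hwstarW)
    have hminA : Atil (wN N ω) ≤ Atil wstar := by
      rw [hAtil]
      exact mul_le_mul_of_nonneg_left ((hwNmin N ω).2 wstar hwstarW) hNinvpos
    linarith [hd1.1, hd1.2, hd2.1, hd2.2]
  -- conclusion by squeezing
  have hE₁' : Filter.Tendsto (fun N => P (E₁ N)) Filter.atTop (𝓝 0) := by
    simp only [hE₁def]; exact hE₁
  have hE₂' : Filter.Tendsto (fun N => P (E₂ N)) Filter.atTop (𝓝 0) := by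
    simp only [hE₂def]; exact hE₂
  have hub : ∀ᶠ N in Filter.atTop, P {ω | ε < Metric.infDist (wN N ω) Wstar}
      ≤ P (E₁ N) + P (E₂ N) + P (E₃ N) := by
    filter_upwards [Filter.eventually_ge_atTop 1] with N hN
    calc P {ω | ε < Metric.infDist (wN N ω) Wstar}
        ≤ P (E₁ N ∪ E₂ N ∪ E₃ N) := measure_mono (hincl N hN)
      _ ≤ P (E₁ N ∪ E₂ N) + P (E₃ N) := measure_union_le _ _
      _ ≤ P (E₁ N) + P (E₂ N) + P (E₃ N) := add_le_add_left (measure_union_le _ _) _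
  have hsumE : Filter.Tendsto (fun N => P (E₁ N) + P (E₂ N) + P (E₃ N))
      Filter.atTop (𝓝 0) := by
    have h12 := (hE₁'.add hE₂').add hE₃
    simpa using h12
  exact tendsto_of_tendsto_of_tendsto_of_le_of_le' tendsto_const_nhds hsumE
    (Filter.Eventually.of_forall fun N => zero_le) hub
end

section
/- Let H be a real Hilbert space and Γ_X, Γ_E continuous positive self-adjoint operators on H. Suppose a₁ ∈ H satisfies ⟨Γ_X a₁,a₁⟩ = 1 and Γ_E a₁ = λ₁ Γ_X a₁ (so λ₁ = ⟨Γ_E a₁,a₁⟩), and that there is λ₂ with 0 ≤ λ₂ < λ₁ such that ⟨Γ_E u,u⟩ ≤ λ₂ ⟨Γ_X u,u⟩ for every u ∈ H with ⟨Γ_X u,a₁⟩ = 0. Then for every a ∈ H with ⟨Γ_X a,a₁⟩ = 1, setting μ = ⟨Γ_X(a − a₁), a − a₁⟩, one has ⟨Γ_E a,a⟩ / ⟨Γ_X a,a⟩ ≤ (λ₁ + λ₂ μ)/(1 + μ); in particular λ₁^{-1}⟨Γ_E a,a⟩/⟨Γ_X a,a⟩ ≤ (1 + λ₁^{-1}λ₂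 μ)/(1 + μ) < 1 whenever μ > 0. -/
open scoped RealInnerProductSpace

/-- If `⟪Γ_X a₁,a₁⟫ = 1`, `Γ_E a₁ = λ₁ Γ_X a₁`, and
`⟪Γ_E u,u⟫ ≤ λ₂ ⟪Γ_X u,u⟫` whenever `⟪Γ_X u,a₁⟫ = 0`, with `0 ≤ λ₂ < λ₁`, then for every
`a` with `⟪Γ_X a,a₁⟫ = 1` and `μ = ⟪Γ_X(a−a₁),a−a₁⟫` one has
`⟪Γ_E a,a⟫/⟪Γ_X a,a⟫ ≤ (λ₁ + λ₂ μ)/(1+μ)`; in particular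
`λ₁⁻¹ ⟪Γ_E a,a⟫/⟪Γ_X a,a⟫ ≤ (1 + λ₁⁻¹ λ₂ μ)/(1+μ) < 1` whenever `μ > 0`. -/
theorem rayleigh_quotient_gap_bound
    {H : Type*} [NormedAddCommGroup H] [InnerProductSpace ℝ H]
    (ΓX ΓE : H →L[ℝ] H)
    (hΓXpos : ∀ u : H, 0 ≤ ⟪ΓX u, u⟫) (hΓXsa : ∀ u v : H, ⟪ΓX u, v⟫ = ⟪u, ΓX v⟫)
    (hΓEpos : ∀ u : H, 0 ≤ ⟪ΓE u, u⟫) (hΓEsa : ∀ u v : H, ⟪ΓE u, v⟫ = ⟪u, ΓE v⟫)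
    (a₁ : H) (lam₁ lam₂ : ℝ)
    (ha₁norm : ⟪ΓX a₁, a₁⟫ = 1)
    (ha₁eig : ΓE a₁ = lam₁ • ΓX a₁)
    (hlam₁ : lam₁ = ⟪ΓE a₁, a₁⟫)
    (hlam₂nonneg : 0 ≤ lam₂) (hlt : lam₂ < lam₁)
    (hgap : ∀ u : H, ⟪ΓX u, a₁⟫ = 0 → ⟪ΓE u, u⟫ ≤ lam₂ * ⟪ΓX u, u⟫)
    (a : H) (ha : ⟪ΓX a, a₁⟫ = 1)
    (μ : ℝ) (hμ : μ = ⟪ΓX (a - a₁), a - a₁⟫) :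
    ⟪ΓE a, a⟫ / ⟪ΓX a, a⟫ ≤ (lam₁ + lam₂ * μ) / (1 + μ) ∧
      (lam₁⁻¹ * (⟪ΓE a, a⟫ / ⟪ΓX a, a⟫) ≤ (1 + lam₁⁻¹ * lam₂ * μ) / (1 + μ)) ∧
      (0 < μ → (1 + lam₁⁻¹ * lam₂ * μ) / (1 + μ) < 1) := by
  set u := a - a₁ with hu
  have hlam₁pos : 0 < lam₁ := lt_of_le_of_lt hlam₂nonneg hlt
  have hμ0 : 0 ≤ μ := hμ ▸ hΓXpos u
  have hden : (0:ℝ) < 1 + μ := by linarith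
  -- ⟪ΓX u, a₁⟫ = 0
  have hXua₁ : ⟪ΓX u, a₁⟫ = 0 := by
    simp [hu, map_sub, inner_sub_left, ha, ha₁norm]
  have hXa₁u : ⟪ΓX a₁, u⟫ = 0 := by
    rw [hΓXsa, real_inner_comm, hXua₁]
  have hEa₁u : ⟪ΓE a₁, u⟫ = 0 := by
    rw [ha₁eig, inner_smul_left]
    simp [hXa₁u]
  have hEua₁ : ⟪ΓE u, a₁⟫ = 0 := by
    rw [hΓEsa, real_inner_comm, hEa₁u]
  have haeq : a = a₁ + u := by simp [hu]
  -- expand ⟪ΓX a, a⟫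
  have hXaa : ⟪ΓX a, a⟫ = 1 + μ := by
    rw [haeq, map_add, inner_add_left, inner_add_right, inner_add_right,
      ha₁norm, hXa₁u, hXua₁, hμ]
    ring
  have hEaa : ⟪ΓE a, a⟫ = lam₁ + ⟪ΓE u, u⟫ := by
    rw [haeq, map_add, inner_add_left, inner_add_right, inner_add_right,
      ← hlam₁, hEa₁u, hEua₁]
    ring
  have hguu : ⟪ΓE u, u⟫ ≤ lam₂ * μ := by
    have := hgap u hXua₁
    rw [← hμ] at this
    exact this
  have h1 : ⟪ΓE a, a⟫ / ⟪ΓX a, a⟫ ≤ (lam₁ + lam₂ * μ) / (1 + μ) := by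
    rw [hXaa, hEaa]
    gcongr
  have key : (1 + lam₁⁻¹ * lam₂ * μ) = lam₁⁻¹ * (lam₁ + lam₂ * μ) := by
    field_simp
  refine ⟨h1, ?_, ?_⟩
  · rw [key, mul_div_assoc]
    exact mul_le_mul_of_nonneg_left h1 (inv_nonneg.mpr hlam₁pos.le)
  · intro hμpos
    rw [div_lt_one hden]
    have : lam₁⁻¹ * lam₂ < 1 := by
      rw [inv_mul_lt_iff₀ hlam₁pos]
      linarith
    nlinarith
end

section
/- Let g(x) = eˣ/(1+eˣ) be the logistic sigmoid and, for a weight vector w = ((w_i^{(0)})_{i≤q₂}, (w_i^{(1)})_{i≤q₂} with each w_i^{(1)} ∈ ℝ^q, (w_i^{(2)})_{i≤q₂}), define the perceptron output ψ_w(u) = Σ_{i=1}^{q₂} w_i^{(2)} g(⟨w_i^{(1)}, u⟩ + w_i^{(0)}) for u ∈ ℝ^q, and the squared-error loss ζ((u,y),w) = (ψ_w(u) − y)². Then for every M ≥ 0, every y with |y| ≤ M, every w, and all u, u' ∈ ℝ^q, |ζ((u,y),w) − ζ((u',y),w)| ≤ C(w)‖u − u'‖ with C(w) = (1/2)(Σ_{i=1}^{q₂}|w_i^{(2)}|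 + M) · Σ_{i=1}^{q₂} |w_i^{(2)}| ‖w_i^{(1)}‖. In particular, assumption (A9) (Lipschitz continuity of ζ in its first argument, with constant depending on w) holds for the one-hidden-layer sigmoid perceptron with square error loss when the targets Y are bounded. -/
open scoped RealInnerProductSpace

lemma sigmoid_lip_aux (a b : ℝ) :
    |Real.exp a / (1 + Real.exp a) - Real.exp b / (1 + Real.exp b)| ≤ 1 / 4 * |a - b| := by
  have hd : ∀ x : ℝ, HasDerivWithinAt (fun x : ℝ => Real.exp x / (1 + Real.exp x))
      (Real.exp x / (1 + Real.exp x) ^ 2) Set.univ x := by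
    intro x
    have h1 : (1 : ℝ) + Real.exp x ≠ 0 := by positivity
    have := (Real.hasDerivAt_exp x).div
      ((hasDerivAt_const x (1 : ℝ)).add (Real.hasDerivAt_exp x)) h1
    have heq : (Real.exp x * (1 + Real.exp x) - Real.exp x * (0 + Real.exp x)) /
        (1 + Real.exp x) ^ 2 = Real.exp x / (1 + Real.exp x) ^ 2 := by ring
    have this : HasDerivAt (fun x : ℝ => Real.exp x / (1 + Real.exp x))
        ((Real.exp x * (1 + Real.exp x) - Real.exp x * (0 + Real.exp x)) /
          (1 + Real.exp x) ^ 2) x := this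
    rw [heq] at this
    exact this.hasDerivWithinAt
  have bound : ∀ x ∈ Set.univ, ‖Real.exp x / (1 + Real.exp x) ^ 2‖ ≤ 1 / 4 := by
    intro x _
    have he : 0 < Real.exp x := Real.exp_pos x
    rw [Real.norm_eq_abs, abs_of_nonneg (by positivity)]
    rw [div_le_iff₀ (by positivity)]
    nlinarith [sq_nonneg (1 - Real.exp x)]
  have := convex_univ.norm_image_sub_le_of_norm_hasDerivWithin_le
    (fun x _ => hd x) bound (Set.mem_univ a) (Set.mem_univ b)
  simpa [Real.norm_eq_abs, abs_sub_comm] using this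

/-- The square error loss of a one-hidden-layer sigmoid perceptron is
Lipschitz in the input: with `g(x) = eˣ/(1+eˣ)`,
`ψ_w(u) = Σᵢ w⁽²⁾ᵢ g(⟪w⁽¹⁾ᵢ,u⟫ + w⁽⁰⁾ᵢ)` and `ζ((u,y),w) = (ψ_w(u) − y)²`, for `|y| ≤ M`
one has `|ζ((u,y),w) − ζ((u',y),w)| ≤ C(w)‖u − u'‖` with
`C(w) = (1/2)(Σᵢ|w⁽²⁾ᵢ| + M) Σᵢ |w⁽²⁾ᵢ| ‖w⁽¹⁾ᵢ‖`. -/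
theorem sigmoid_perceptron_square_loss_lipschitz
    {q q₂ : ℕ}
    (g : ℝ → ℝ) (hg : ∀ x : ℝ, g x = Real.exp x / (1 + Real.exp x))
    (w0 : Fin q₂ → ℝ) (w1 : Fin q₂ → EuclideanSpace ℝ (Fin q)) (w2 : Fin q₂ → ℝ)
    (ψ : EuclideanSpace ℝ (Fin q) → ℝ)
    (hψ : ∀ u, ψ u = ∑ i : Fin q₂, w2 i * g (⟪w1 i, u⟫ + w0 i))
    (ζ : EuclideanSpace ℝ (Fin q) × ℝ → ℝ)
    (hζ : ∀ u y, ζ (u, y) = (ψ u - y) ^ 2)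
    (M : ℝ) (hM : 0 ≤ M)
    (C : ℝ)
    (hC : C = 1 / 2 * ((∑ i : Fin q₂, |w2 i|) + M) * ∑ i : Fin q₂, |w2 i| * ‖w1 i‖) :
    ∀ (y : ℝ), |y| ≤ M → ∀ u u' : EuclideanSpace ℝ (Fin q),
      |ζ (u, y) - ζ (u', y)| ≤ C * ‖u - u'‖ := by
  intro y hy u u'
  set S1 : ℝ := ∑ i : Fin q₂, |w2 i| * ‖w1 i‖ with hS1
  set S2 : ℝ := ∑ i : Fin q₂, |w2 i| with hS2
  have hglip : ∀ a b : ℝ, |g a - g b| ≤ 1 / 4 * |a - b| := by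
    intro a b; rw [hg, hg]; exact sigmoid_lip_aux a b
  have hgbd : ∀ x : ℝ, |g x| ≤ 1 := by
    intro x
    rw [hg]
    have he : 0 < Real.exp x := Real.exp_pos x
    rw [abs_of_nonneg (by positivity), div_le_one (by positivity)]
    linarith
  -- bound on ψ
  have hψbd : ∀ u : EuclideanSpace ℝ (Fin q), |ψ u| ≤ S2 := by
    intro u
    rw [hψ]
    refine (Finset.abs_sum_le_sum_abs _ _).trans (Finset.sum_le_sum fun i _ => ?_)
    rw [abs_mul]
    calc |w2 i| * |g (⟪w1 i, u⟫ + w0 i)| ≤ |w2 i| * 1 :=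
          mul_le_mul_of_nonneg_left (hgbd _) (abs_nonneg _)
      _ = |w2 i| := mul_one _
  -- Lipschitz bound on ψ
  have hψlip : |ψ u - ψ u'| ≤ 1 / 4 * S1 * ‖u - u'‖ := by
    rw [hψ, hψ, ← Finset.sum_sub_distrib]
    refine (Finset.abs_sum_le_sum_abs _ _).trans ?_
    have : ∀ i ∈ Finset.univ, |w2 i * g (⟪w1 i, u⟫ + w0 i) - w2 i * g (⟪w1 i, u'⟫ + w0 i)|
        ≤ 1 / 4 * (|w2 i| * ‖w1 i‖) * ‖u - u'‖ := by
      intro i _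
      rw [← mul_sub, abs_mul]
      have h1 : |g (⟪w1 i, u⟫ + w0 i) - g (⟪w1 i, u'⟫ + w0 i)|
          ≤ 1 / 4 * (‖w1 i‖ * ‖u - u'‖) := by
        refine (hglip _ _).trans ?_
        have h2 : (⟪w1 i, u⟫ + w0 i) - (⟪w1 i, u'⟫ + w0 i) = ⟪w1 i, u - u'⟫ := by
          rw [inner_sub_right]; ring
        rw [h2]
        exact mul_le_mul_of_nonneg_left (abs_real_inner_le_norm _ _) (by norm_num)
      calc |w2 i| * |g (⟪w1 i, u⟫ + w0 i) - g (⟪w1 i, u'⟫ + w0 i)|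
          ≤ |w2 i| * (1 / 4 * (‖w1 i‖ * ‖u - u'‖)) :=
            mul_le_mul_of_nonneg_left h1 (abs_nonneg _)
        _ = 1 / 4 * (|w2 i| * ‖w1 i‖) * ‖u - u'‖ := by ring
    refine (Finset.sum_le_sum this).trans ?_
    rw [← Finset.sum_mul, ← Finset.mul_sum]
  -- put together
  rw [hζ, hζ]
  have key : (ψ u - y) ^ 2 - (ψ u' - y) ^ 2 = (ψ u - ψ u') * (ψ u + ψ u' - 2 * y) := by ring
  rw [key, abs_mul]
  have h2 : |ψ u + ψ u' - 2 * y| ≤ 2 * (S2 + M) := by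
    have := hψbd u; have := hψbd u'
    have h3 := abs_le.mp hy
    have h4 := abs_le.mp (hψbd u); have h5 := abs_le.mp (hψbd u')
    rw [abs_le]; constructor <;> linarith
  have hS1nn : 0 ≤ S1 := Finset.sum_nonneg fun i _ => by positivity
  have hS2nn : 0 ≤ S2 := Finset.sum_nonneg fun i _ => abs_nonneg _
  calc |ψ u - ψ u'| * |ψ u + ψ u' - 2 * y|
      ≤ (1 / 4 * S1 * ‖u - u'‖) * (2 * (S2 + M)) :=
        mul_le_mul hψlip h2 (abs_nonneg _) (by positivity)
    _ = C * ‖u - u'‖ := by rw [hC]; ring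
end

section
/- Uniform convergence of the plug-in empirical risk: in the perceptron setting, assume (A7) ζ(z,·) is continuous on W for every z ∈ O; (A8) there is a measurable ζ̃ : O → ℝ with |ζ(z,w)| ≤ ζ̃(z) for all z ∈ O, w ∈ W, and E[ζ̃(Z)] < ∞; (A9) for every w ∈ W there is C(w) > 0 with |ζ((x,y),w) − ζ((x',y),w)| ≤ C(w)‖x − x'‖ for all (x,y),(x',y) ∈ O, and sup_{w∈W} C(w) < ∞; (A10) ζ(·,w) is measurable for every w ∈ W. Assume moreover that the random estimates a_j^N ∈ H satisfy, for each j = 1,…,q, ⟨Γ̂_N(a_j^N − a_j), a_j^N − a_j⟩ →_p 0, where Γ̂_N u = (1/N)Σ_{n≤N}⟨u,Xⁿ⟩Xⁿ. Then sup_{w∈W} |(1/N) Σ_{n=1}^N ζ(Z̃_N^n, w) − E[ζ(Z,w)]| → 0 in probability as N → ∞. -/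
open MeasureTheory ProbabilityTheory
open scoped RealInnerProductSpace

open Filter Topology in
private lemma aux_slln {Ω : Type*} [MeasurableSpace Ω] (P : Measure Ω) [IsProbabilityMeasure P]
    {α : Type*} [MeasurableSpace α] (pair : ℕ → Ω → α) (pair0 : Ω → α)
    (hmeas : ∀ n, Measurable (pair n)) (hmeas0 : Measurable pair0)
    (hiid : iIndepFun pair P)
    (hid : ∀ n, Measure.map (pair n) P = Measure.map pair0 P)
    (Θ : α → ℝ) (hΘ : Measurable Θ) (hintg : Integrable (fun ω => Θ (pair0 ω)) P) :
    ∀ᵐ ω ∂P, Tendsto (fun N : ℕ => (N : ℝ)⁻¹ * ∑ n ∈ Finset.range N, Θ (pair n ω)) atTop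
      (𝓝 (∫ ω, Θ (pair0 ω) ∂P)) := by
  set ξ : ℕ → Ω → ℝ := fun n ω => Θ (pair n ω) with hξ
  have hidt : ∀ n, IdentDistrib (ξ n) (fun ω => Θ (pair0 ω)) P P := by
    intro n
    refine ⟨(hΘ.comp (hmeas n)).aemeasurable, (hΘ.comp hmeas0).aemeasurable, ?_⟩
    show Measure.map (Θ ∘ pair n) P = Measure.map (Θ ∘ pair0) P
    rw [← Measure.map_map hΘ (hmeas n), ← Measure.map_map hΘ hmeas0, hid n]
  have hidt0 : ∀ n, IdentDistrib (ξ n) (ξ 0) P P := fun n => (hidt n).trans (hidt 0).symm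
  have hint0 : Integrable (ξ 0) P := (hidt 0).integrable_iff.2 hintg
  have hindep : Pairwise (Function.onFun (IndepFun · · P) ξ) := by
    intro i j hij
    exact (hiid.indepFun hij).comp hΘ hΘ
  have h := strong_law_ae ξ hint0 hindep hidt0
  have hEq : (∫ ω, ξ 0 ω ∂P) = ∫ ω, Θ (pair0 ω) ∂P := (hidt 0).integral_eq
  filter_upwards [h] with ω hω
  simpa [hEq, smul_eq_mul] using hω

open scoped Classical in
private lemma aux_ext_meas {α : Type*} [MeasurableSpace α] {O : Set α} (hO : MeasurableSet O)
    (θ : α → ℝ) (hθ : Measurable fun z : O => θ z) :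
    Measurable fun z => if z ∈ O then θ z else 0 := by
  have : (fun z => if z ∈ O then θ z else 0)
      = fun z => if h : z ∈ O then (fun z : O => θ z) ⟨z, h⟩
          else (fun _ : (Oᶜ : Set α) => (0:ℝ)) ⟨z, by simpa using h⟩ := by
    ext z; by_cases h : z ∈ O <;> simp [h]
  rw [this]
  exact Measurable.dite hθ measurable_const hO

private lemma aux_abs_chain (a b c d e : ℝ) :
    |a - e| ≤ |a - b| + |b - c| + |c - d| + |d - e| := by
  have h1 := abs_sub_le a b e
  have h2 := abs_sub_le b c e
  have h3 := abs_sub_le c d e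
  linarith

/-- Uniform convergence in probability of the plug-in empirical risk:
in the perceptron setting, under (A7)–(A10) and consistency of the projections
`⟪Γ̂_N(a_j^N − a_j), a_j^N − a_j⟫ →_p 0`, one has
`sup_{w∈W} |(1/N) Σ_n ζ(Z̃_N^n, w) − E[ζ(Z,w)]| →_p 0`. -/
theorem plugin_empirical_risk_uniform_convergence
    {Ω : Type*} [MeasurableSpace Ω] (P : Measure Ω) [IsProbabilityMeasure P]
    {H : Type*} [NormedAddCommGroup H] [InnerProductSpace ℝ H] [CompleteSpace H]
    [SecondCountableTopology H] [MeasurableSpace H] [BorelSpace H]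
    {q q₂ : ℕ}
    -- the pair (X, Y) and its i.i.d. copies
    (X : Ω → H) (hXmeas : Measurable X) (hXcentered : ∫ ω, X ω ∂P = 0)
    (hX4 : Integrable (fun ω => ‖X ω‖ ^ 4) P)
    (Y : Ω → ℝ) (hYmeas : Measurable Y)
    (Xn : ℕ → Ω → H) (Yn : ℕ → Ω → ℝ)
    (hXnmeas : ∀ n, Measurable (Xn n)) (hYnmeas : ∀ n, Measurable (Yn n))
    (hiid : iIndepFun
      (fun n ω => (Xn n ω, Yn n ω)) P)
    (hident : ∀ n, Measure.map (fun ω => (Xn n ω, Yn n ω)) P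
      = Measure.map (fun ω => (X ω, Y ω)) P)
    -- the (fixed) EDR directions and their random estimates
    (a : Fin q → H)
    (aN : ℕ → Fin q → Ω → H) (haNmeas : ∀ N j, Measurable (aN N j))
    -- the empirical second-moment operator Γ̂_N
    (ΓhatN : ℕ → Ω → H → H)
    (hΓhatN : ∀ (N : ℕ) (ω : Ω) (u : H),
      ΓhatN N ω u = (N : ℝ)⁻¹ • ∑ n ∈ Finset.range N, ⟪u, Xn n ω⟫ • Xn n ω)
    -- consistency of the estimated projections
    (haNcons : ∀ j : Fin q, ∀ ε : ℝ, 0 < ε →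
      Filter.Tendsto
        (fun N : ℕ => P {ω | ε < ⟪ΓhatN N ω (aN N j ω - a j), aN N j ω - a j⟫})
        Filter.atTop (nhds 0))
    -- the open set O, the compact set of weights W
    (O : Set (EuclideanSpace ℝ (Fin q) × ℝ)) (hO : IsOpen O)
    (W : Set (PerceptronWeights q q₂)) (hWne : W.Nonempty) (hWcpt : IsCompact W)
    -- activation, loss and the induced criterion ζ
    (g : ℝ → ℝ) (L : ℝ → ℝ → ℝ)
    (ζ : EuclideanSpace ℝ (Fin q) × ℝ → PerceptronWeights q q₂ → ℝ)
    (hζ : ∀ (z : EuclideanSpace ℝ (Fin q) × ℝ) (w : PerceptronWeights q q₂),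
      ζ z w = L (∑ i : Fin q₂, w.1 i * g ((∑ j : Fin q, w.2.1 i j * z.1 j) + w.2.2 i)) z.2)
    -- Z, Z_n and the plug-in Z̃_N^n, all with values in O
    (Z : Ω → EuclideanSpace ℝ (Fin q) × ℝ)
    (hZ : ∀ ω, Z ω = ((WithLp.toLp 2 (fun j => ⟪X ω, a j⟫) : EuclideanSpace ℝ (Fin q)), Y ω))
    (hZO : ∀ ω, Z ω ∈ O)
    (hZnO : ∀ (n : ℕ) (ω : Ω),
      ((WithLp.toLp 2 (fun j => ⟪Xn n ω, a j⟫) : EuclideanSpace ℝ (Fin q)), Yn n ω) ∈ O)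
    (Ztilde : ℕ → ℕ → Ω → EuclideanSpace ℝ (Fin q) × ℝ)
    (hZtilde : ∀ (N n : ℕ) (ω : Ω),
      Ztilde N n ω = ((WithLp.toLp 2 (fun j => ⟪Xn n ω, aN N j ω⟫) : EuclideanSpace ℝ (Fin q)), Yn n ω))
    (hZtildeO : ∀ (N n : ℕ) (ω : Ω), Ztilde N n ω ∈ O)
    -- (A7): continuity in the weights
    (hA7 : ∀ z ∈ O, ContinuousOn (ζ z) W)
    -- (A8): domination by an integrable function
    (ζtilde : EuclideanSpace ℝ (Fin q) × ℝ → ℝ)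
    (hζtmeas : Measurable fun z : O => ζtilde (z : EuclideanSpace ℝ (Fin q) × ℝ))
    (hdom : ∀ z ∈ O, ∀ w ∈ W, |ζ z w| ≤ ζtilde z)
    (hint : Integrable (fun ω => ζtilde (Z ω)) P)
    -- (A9): Lipschitz continuity in the first argument, uniformly over W
    (C : PerceptronWeights q q₂ → ℝ) (hCpos : ∀ w ∈ W, 0 < C w)
    (hA9 : ∀ w ∈ W, ∀ (x x' : EuclideanSpace ℝ (Fin q)) (y : ℝ),
      (x, y) ∈ O → (x', y) ∈ O → |ζ (x, y) w - ζ (x', y) w| ≤ C w * ‖x - x'‖)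
    (hCbdd : ∃ M : ℝ, ∀ w ∈ W, C w ≤ M)
    -- (A10): measurability in the first argument
    (hA10 : ∀ w ∈ W, Measurable fun z : O => ζ (z : EuclideanSpace ℝ (Fin q) × ℝ) w) :
    ∀ ε : ℝ, 0 < ε →
      Filter.Tendsto
        (fun N : ℕ => P {ω | ε < sSup ((fun w =>
          |(N : ℝ)⁻¹ * ∑ n ∈ Finset.range N, ζ (Ztilde N n ω) w
            - ∫ ω', ζ (Z ω') w ∂P|) '' W)})
        Filter.atTop (nhds 0) := by
  classical
  intro ε hε
  obtain ⟨wstar, hwstar⟩ := hWne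
  have hOmeas : MeasurableSet O := hO.measurableSet
  have hζt0 : ∀ z ∈ O, 0 ≤ ζtilde z :=
    fun z hz => le_trans (abs_nonneg _) (hdom z hz wstar hwstar)
  -- the projection map
  set φ : H × ℝ → EuclideanSpace ℝ (Fin q) × ℝ :=
    fun p => ((WithLp.toLp 2 (fun j => ⟪p.1, a j⟫) : EuclideanSpace ℝ (Fin q)), p.2) with hφdef
  have hφ : Measurable φ := by
    refine Measurable.prodMk ?_ measurable_snd
    have : Continuous (fun p : H × ℝ =>
        (WithLp.toLp 2 (fun j => ⟪p.1, a j⟫) : EuclideanSpace ℝ (Fin q))) := by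
      apply Continuous.comp (g := fun v : Fin q → ℝ => (WithLp.toLp 2 v : EuclideanSpace ℝ (Fin q)))
      · exact (PiLp.continuous_toLp 2 fun _ : Fin q => ℝ)
      · exact continuous_pi fun j => (continuous_fst.inner continuous_const)
    exact this.measurable
  set pair : ℕ → Ω → H × ℝ := fun n ω => (Xn n ω, Yn n ω) with hpairdef
  set pair0 : Ω → H × ℝ := fun ω => (X ω, Y ω) with hpair0def
  have hpair : ∀ n, Measurable (pair n) := fun n => (hXnmeas n).prodMk (hYnmeas n)
  have hpair0 : Measurable pair0 := hXmeas.prodMk hYmeas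
  set Zn : ℕ → Ω → EuclideanSpace ℝ (Fin q) × ℝ := fun n ω => φ (pair n ω) with hZndef
  have hZnO' : ∀ n ω, Zn n ω ∈ O := fun n ω => hZnO n ω
  have hφ0 : ∀ ω, φ (pair0 ω) = Z ω := fun ω => (hZ ω).symm
  -- master lemma: measurability, integrability and SLLN for dominated criteria
  have master : ∀ θ : EuclideanSpace ℝ (Fin q) × ℝ → ℝ,
      (Measurable fun z : O => θ z) → (∀ z ∈ O, |θ z| ≤ 2 * ζtilde z) →
      Integrable (fun ω => θ (Z ω)) P ∧
      (∀ N : ℕ, Measurable fun ω => (N : ℝ)⁻¹ * ∑ n ∈ Finset.range N, θ (Zn n ω)) ∧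
      (∀ᵐ ω ∂P, Filter.Tendsto
        (fun N : ℕ => (N : ℝ)⁻¹ * ∑ n ∈ Finset.range N, θ (Zn n ω)) Filter.atTop
        (nhds (∫ ω', θ (Z ω') ∂P))) := by
    intro θ hθm hθb
    set Θ : H × ℝ → ℝ := fun p => if φ p ∈ O then θ (φ p) else 0 with hΘdef
    have hΘ : Measurable Θ := (aux_ext_meas hOmeas θ hθm).comp hφ
    have hΘ0 : ∀ ω, Θ (pair0 ω) = θ (Z ω) := by
      intro ω
      simp only [hΘdef, hφ0 ω, if_pos (hZO ω)]
    have hΘn : ∀ n ω, Θ (pair n ω) = θ (Zn n ω) := by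
      intro n ω
      simp only [hΘdef]
      exact if_pos (hZnO' n ω)
    have hmeasZ : Measurable fun ω => θ (Z ω) := by
      have h := hΘ.comp hpair0
      have he : Θ ∘ pair0 = fun ω => θ (Z ω) := funext fun ω => hΘ0 ω
      rwa [he] at h
    have hintθ : Integrable (fun ω => θ (Z ω)) P := by
      refine (hint.const_mul 2).mono hmeasZ.aestronglyMeasurable (ae_of_all _ fun ω => ?_)
      have h1 := hθb (Z ω) (hZO ω)
      calc ‖θ (Z ω)‖ = |θ (Z ω)| := rfl
        _ ≤ 2 * ζtilde (Z ω) := h1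
        _ ≤ ‖2 * ζtilde (Z ω)‖ := le_abs_self _
    have hmeasn : ∀ n, Measurable fun ω => θ (Zn n ω) := by
      intro n
      have h := hΘ.comp (hpair n)
      have he : Θ ∘ pair n = fun ω => θ (Zn n ω) := funext fun ω => hΘn n ω
      rwa [he] at h
    refine ⟨hintθ, ?_, ?_⟩
    · intro N
      exact measurable_const.mul (Finset.measurable_sum _ fun n _ => hmeasn n)
    · have hintΘ : Integrable (fun ω => Θ (pair0 ω)) P := by
        have : (fun ω => Θ (pair0 ω)) = fun ω => θ (Z ω) := funext hΘ0
        rw [this]; exact hintθ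
      have h := aux_slln P pair pair0 hpair hpair0 hiid hident Θ hΘ hintΘ
      have hIeq : (∫ ω, Θ (pair0 ω) ∂P) = ∫ ω', θ (Z ω') ∂P := by
        congr 1; exact funext hΘ0
      filter_upwards [h] with ω hω
      simp only [hΘn, hIeq] at hω
      exact hω

  -- dense sequence in W
  haveI : Nonempty W := Set.Nonempty.to_subtype ⟨wstar, hwstar⟩
  set u : ℕ → W := TopologicalSpace.denseSeq W with hudef
  have hu : DenseRange u := TopologicalSpace.denseRange_denseSeq W
  -- the local oscillation envelope
  set Δ : PerceptronWeights q q₂ → ℝ → EuclideanSpace ℝ (Fin q) × ℝ → ℝ :=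
    fun w₀ r z => ⨆ n : ℕ, if (u n : PerceptronWeights q q₂) ∈ Metric.ball w₀ r
      then |ζ z (u n) - ζ z w₀| else 0 with hΔdef
  have hterm_nonneg : ∀ (w₀ : PerceptronWeights q q₂) (r : ℝ)
      (z : EuclideanSpace ℝ (Fin q) × ℝ) (n : ℕ),
      (0:ℝ) ≤ (if (u n : PerceptronWeights q q₂) ∈ Metric.ball w₀ r
        then |ζ z (u n) - ζ z w₀| else 0) := by
    intro w₀ r z n; split_ifs <;> simp [abs_nonneg]
  have hterm_le : ∀ w₀ ∈ W, ∀ (r : ℝ), ∀ z ∈ O, ∀ n : ℕ,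
      (if (u n : PerceptronWeights q q₂) ∈ Metric.ball w₀ r
        then |ζ z (u n) - ζ z w₀| else 0) ≤ 2 * ζtilde z := by
    intro w₀ hw₀ r z hz n
    split_ifs
    · calc |ζ z (u n) - ζ z w₀| ≤ |ζ z (u n)| + |ζ z w₀| := abs_sub _ _
        _ ≤ ζtilde z + ζtilde z := add_le_add (hdom z hz _ (u n).2) (hdom z hz _ hw₀)
        _ = 2 * ζtilde z := by ring
    · linarith [hζt0 z hz]
  have hbdd : ∀ w₀ ∈ W, ∀ (r : ℝ), ∀ z ∈ O,
      BddAbove (Set.range fun n : ℕ =>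
        if (u n : PerceptronWeights q q₂) ∈ Metric.ball w₀ r
        then |ζ z (u n) - ζ z w₀| else 0) := by
    intro w₀ hw₀ r z hz
    exact ⟨2 * ζtilde z, by rintro x ⟨n, rfl⟩; exact hterm_le w₀ hw₀ r z hz n⟩
  have hΔ_nonneg : ∀ w₀ ∈ W, ∀ (r : ℝ), ∀ z ∈ O, 0 ≤ Δ w₀ r z := by
    intro w₀ hw₀ r z hz
    exact le_trans (hterm_nonneg w₀ r z 0) (le_ciSup (hbdd w₀ hw₀ r z hz) 0)
  have hΔ_le : ∀ w₀ ∈ W, ∀ (r : ℝ), ∀ z ∈ O, Δ w₀ r z ≤ 2 * ζtilde z := by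
    intro w₀ hw₀ r z hz
    exact Real.iSup_le (hterm_le w₀ hw₀ r z hz) (by linarith [hζt0 z hz])
  have hΔ_dom : ∀ w₀ ∈ W, ∀ (r : ℝ), ∀ z ∈ O, |Δ w₀ r z| ≤ 2 * ζtilde z := by
    intro w₀ hw₀ r z hz
    rw [abs_of_nonneg (hΔ_nonneg w₀ hw₀ r z hz)]
    exact hΔ_le w₀ hw₀ r z hz
  have hΔ_bound : ∀ w₀ ∈ W, ∀ (r : ℝ), ∀ z ∈ O, ∀ w ∈ W, w ∈ Metric.ball w₀ r →
      |ζ z w - ζ z w₀| ≤ Δ w₀ r z := by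
    intro w₀ hw₀ r z hz w hwW hwb
    refine le_of_forall_pos_le_add fun η hη => ?_
    have hc : ContinuousWithinAt (ζ z) W w := hA7 z hz w hwW
    rw [Metric.continuousWithinAt_iff] at hc
    obtain ⟨δ, hδ, hδc⟩ := hc η hη
    have hwb' : dist w w₀ < r := Metric.mem_ball.1 hwb
    have hrd : 0 < min δ (r - dist w w₀) := lt_min hδ (by linarith)
    obtain ⟨n, hn⟩ := Metric.denseRange_iff.1 hu ⟨w, hwW⟩ _ hrd
    rw [Subtype.dist_eq] at hn
    have h1 : dist (↑(u n) : PerceptronWeights q q₂) w < δ := by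
      rw [dist_comm]; exact lt_of_lt_of_le hn (min_le_left _ _)
    have h1' : dist (↑(u n) : PerceptronWeights q q₂) w < r - dist w w₀ := by
      rw [dist_comm]; exact lt_of_lt_of_le hn (min_le_right _ _)
    have h2 : (↑(u n) : PerceptronWeights q q₂) ∈ Metric.ball w₀ r := by
      rw [Metric.mem_ball]
      calc dist (↑(u n) : PerceptronWeights q q₂) w₀
          ≤ dist (↑(u n) : PerceptronWeights q q₂) w + dist w w₀ := dist_triangle _ _ _
        _ < (r - dist w w₀) + dist w w₀ := by linarith
        _ = r := by ring
    have h3 : |ζ z (u n) - ζ z w| < η := by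
      have := hδc (u n).2 h1
      rwa [Real.dist_eq] at this
    have h4 : |ζ z (u n) - ζ z w₀| ≤ Δ w₀ r z := by
      have := le_ciSup (hbdd w₀ hw₀ r z hz) n
      rwa [if_pos h2] at this
    calc |ζ z w - ζ z w₀| ≤ |ζ z w - ζ z (u n)| + |ζ z (u n) - ζ z w₀| := abs_sub_le _ _ _
      _ ≤ η + Δ w₀ r z := add_le_add (by rw [abs_sub_comm]; exact le_of_lt h3) h4
      _ = Δ w₀ r z + η := by ring
  have hΔ_lim : ∀ w₀ ∈ W, ∀ z ∈ O,
      Filter.Tendsto (fun m : ℕ => Δ w₀ (1/(m+1)) z) Filter.atTop (nhds 0) := by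
    intro w₀ hw₀ z hz
    rw [Metric.tendsto_atTop]
    intro η hη
    have hc : ContinuousWithinAt (ζ z) W w₀ := hA7 z hz w₀ hw₀
    rw [Metric.continuousWithinAt_iff] at hc
    obtain ⟨δ, hδ, hδc⟩ := hc (η/2) (by positivity)
    obtain ⟨M, hM⟩ := exists_nat_gt δ⁻¹
    refine ⟨M, fun m hm => ?_⟩
    rw [Real.dist_eq, sub_zero, abs_of_nonneg (hΔ_nonneg w₀ hw₀ _ z hz)]
    have hmd : (1:ℝ)/(m+1) < δ := by
      have h1 : δ⁻¹ < (m:ℝ)+1 := by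
        refine lt_of_lt_of_le hM ?_
        have : (M:ℝ) ≤ (m:ℝ) := Nat.cast_le.2 hm
        linarith
      have h2 : ((m:ℝ)+1)⁻¹ < (δ⁻¹)⁻¹ := by
        apply inv_strictAnti₀ (by positivity) h1
      rw [inv_inv] at h2
      rwa [one_div]
    have hle : Δ w₀ (1/(m+1)) z ≤ η/2 := by
      refine Real.iSup_le (fun n => ?_) (by positivity)
      split_ifs with h
      · have hdist : dist (↑(u n) : PerceptronWeights q q₂) w₀ < δ :=
          lt_trans (Metric.mem_ball.1 h) hmd
        exact le_of_lt (by have := hδc (u n).2 hdist; rwa [Real.dist_eq] at this)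
      · positivity
    linarith
  have hΔ_meas : ∀ w₀ ∈ W, ∀ (r : ℝ), Measurable fun z : O => Δ w₀ r ↑z := by
    intro w₀ hw₀ r
    apply Measurable.iSup
    intro n
    by_cases h : (↑(u n) : PerceptronWeights q q₂) ∈ Metric.ball w₀ r
    · simpa only [if_pos h, Pi.sub_apply] using ((hA10 _ (u n).2).sub (hA10 _ hw₀)).abs
    · simpa only [if_neg h] using (measurable_const : Measurable fun _ : O => (0:ℝ))
  -- choose radii with small expected oscillation
  have hsel : ∀ w₀ ∈ W, ∃ r : ℝ, 0 < r ∧ ∫ ω, Δ w₀ r (Z ω) ∂P < ε/4 := by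
    intro w₀ hw₀
    have hDCT : Filter.Tendsto (fun m : ℕ => ∫ ω, Δ w₀ (1/(m+1)) (Z ω) ∂P)
        Filter.atTop (nhds 0) := by
      have h0 : (0:ℝ) = ∫ (_ : Ω), (0:ℝ) ∂P := (integral_zero _ _).symm
      rw [h0]
      refine tendsto_integral_of_dominated_convergence (fun ω => 2 * ζtilde (Z ω))
        (fun m => ?_) (hint.const_mul 2) (fun m => ae_of_all _ fun ω => ?_)
        (ae_of_all _ fun ω => ?_)
      · exact ((master (Δ w₀ (1/(m+1))) (hΔ_meas w₀ hw₀ _)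
          (fun z hz => hΔ_dom w₀ hw₀ _ z hz)).1).aestronglyMeasurable
      · exact hΔ_dom w₀ hw₀ _ (Z ω) (hZO ω)
      · exact hΔ_lim w₀ hw₀ (Z ω) (hZO ω)
    have hev : ∀ᶠ m : ℕ in Filter.atTop, ∫ ω, Δ w₀ (1/(m+1)) (Z ω) ∂P < ε/4 :=
      hDCT.eventually_lt_const (by positivity)
    obtain ⟨m, hm⟩ := hev.exists
    exact ⟨1/(m+1), by positivity, hm⟩
  have hsel' : ∀ w₀ : PerceptronWeights q q₂, ∃ r : ℝ,
      0 < r ∧ (w₀ ∈ W → ∫ ω, Δ w₀ r (Z ω) ∂P < ε/4) := by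
    intro w₀
    by_cases h : w₀ ∈ W
    · obtain ⟨r, hr, hrI⟩ := hsel w₀ h; exact ⟨r, hr, fun _ => hrI⟩
    · exact ⟨1, one_pos, fun h' => absurd h' h⟩
  choose rad hrad hradI using hsel'
  -- finite subcover
  obtain ⟨t, htW, hcov⟩ := hWcpt.elim_nhds_subcover (fun w₀ => Metric.ball w₀ (rad w₀))
    (fun w₀ _ => Metric.ball_mem_nhds _ (hrad w₀))
  -- per-center quantities
  set EΔ : PerceptronWeights q q₂ → ℝ := fun k => ∫ ω, Δ k (rad k) (Z ω) ∂P with hEΔdef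
  set Rk : PerceptronWeights q q₂ → ℝ := fun k => ∫ ω, ζ (Z ω) k ∂P with hRkdef
  set AN : PerceptronWeights q q₂ → ℕ → Ω → ℝ :=
    fun k N ω => (N:ℝ)⁻¹ * ∑ n ∈ Finset.range N, Δ k (rad k) (Zn n ω) with hANdef
  set BN : PerceptronWeights q q₂ → ℕ → Ω → ℝ :=
    fun k N ω => (N:ℝ)⁻¹ * ∑ n ∈ Finset.range N, ζ (Zn n ω) k with hBNdef
  set V : ℕ → Ω → ℝ :=
    fun N ω => ∑ k ∈ t, (|AN k N ω - EΔ k| + |BN k N ω - Rk k|) with hVdef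
  have hV_nonneg : ∀ N ω, 0 ≤ V N ω := by
    intro N ω
    exact Finset.sum_nonneg fun k _ => add_nonneg (abs_nonneg _) (abs_nonneg _)
  -- the master results for the cover centers
  have hmaster1 : ∀ k ∈ t, Integrable (fun ω => Δ k (rad k) (Z ω)) P ∧
      (∀ N : ℕ, Measurable (AN k N)) ∧
      (∀ᵐ ω ∂P, Filter.Tendsto (fun N => AN k N ω) Filter.atTop (nhds (EΔ k))) := by
    intro k hk
    exact master (Δ k (rad k)) (hΔ_meas k (htW k hk) _)
      (fun z hz => hΔ_dom k (htW k hk) _ z hz)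
  have hζbound2 : ∀ w ∈ W, ∀ z ∈ O, |ζ z w| ≤ 2 * ζtilde z := by
    intro w hw z hz
    have := hdom z hz w hw
    linarith [hζt0 z hz]
  have hmaster2 : ∀ k ∈ t, Integrable (fun ω => ζ (Z ω) k) P ∧
      (∀ N : ℕ, Measurable (BN k N)) ∧
      (∀ᵐ ω ∂P, Filter.Tendsto (fun N => BN k N ω) Filter.atTop (nhds (Rk k))) := by
    intro k hk
    exact master (fun z => ζ z k) (hA10 k (htW k hk))
      (fun z hz => hζbound2 k (htW k hk) z hz)
  -- V converges to 0 a.e.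
  have hVae : ∀ᵐ ω ∂P, Filter.Tendsto (fun N => V N ω) Filter.atTop (nhds 0) := by
    have hall : ∀ᵐ ω ∂P, ∀ k ∈ (t : Set (PerceptronWeights q q₂)),
        (Filter.Tendsto (fun N => AN k N ω) Filter.atTop (nhds (EΔ k)) ∧
         Filter.Tendsto (fun N => BN k N ω) Filter.atTop (nhds (Rk k))) := by
      rw [MeasureTheory.ae_ball_iff (t : Set (PerceptronWeights q q₂)).to_countable]
      intro k hk
      have hk' : k ∈ t := Finset.mem_coe.1 hk
      filter_upwards [(hmaster1 k hk').2.2, (hmaster2 k hk').2.2] with ω h1 h2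
      exact ⟨h1, h2⟩
    filter_upwards [hall] with ω hω
    have h0 : (0:ℝ) = ∑ k ∈ t, ((0:ℝ) + 0) := by simp
    rw [hVdef, h0]
    refine tendsto_finset_sum _ fun k hk => Filter.Tendsto.add ?_ ?_
    · have h1 := Filter.Tendsto.abs ((hω k (Finset.mem_coe.2 hk)).1.sub
        (tendsto_const_nhds : Filter.Tendsto (fun _ : ℕ => EΔ k) Filter.atTop (nhds (EΔ k))))
      simpa using h1
    · have h1 := Filter.Tendsto.abs ((hω k (Finset.mem_coe.2 hk)).2.sub
        (tendsto_const_nhds : Filter.Tendsto (fun _ : ℕ => Rk k) Filter.atTop (nhds (Rk k))))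
      simpa using h1
  have hVmeas : ∀ N, Measurable (V N) := by
    intro N
    refine Finset.measurable_sum _ fun k hk => Measurable.add ?_ ?_
    · exact (((hmaster1 k hk).2.1 N).sub measurable_const).abs
    · exact (((hmaster2 k hk).2.1 N).sub measurable_const).abs
  have hVtim : ∀ δ : ℝ, 0 < δ →
      Filter.Tendsto (fun N : ℕ => P {x | δ ≤ dist (V N x) 0}) Filter.atTop (nhds 0) := by
    have h := tendstoInMeasure_of_tendsto_ae (μ := P) (f := V) (g := fun _ => 0)
      (fun N => (hVmeas N).aestronglyMeasurable)
      (by filter_upwards [hVae] with ω hω; exact hω)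
    exact fun δ hδ => tendstoInMeasure_iff_dist.1 h δ hδ
  -- the Lipschitz constant bound
  obtain ⟨M₀, hM₀⟩ := hCbdd
  set M : ℝ := max M₀ 1 with hMdef
  have hMpos : 0 < M := lt_of_lt_of_le one_pos (le_max_right _ _)
  have hCM : ∀ w ∈ W, C w ≤ M := fun w hw => le_trans (hM₀ w hw) (le_max_left _ _)
  -- the estimated and true projections, as points of Euclidean space
  set xt : ℕ → ℕ → Ω → EuclideanSpace ℝ (Fin q) :=
    fun N n ω => (WithLp.toLp 2 (fun j => ⟪Xn n ω, aN N j ω⟫) : EuclideanSpace ℝ (Fin q)) with hxtdef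
  set x0 : ℕ → Ω → EuclideanSpace ℝ (Fin q) :=
    fun n ω => (WithLp.toLp 2 (fun j => ⟪Xn n ω, a j⟫) : EuclideanSpace ℝ (Fin q)) with hx0def
  -- the plug-in error terms
  set TN : ℕ → Ω → ℝ := fun N ω => (N:ℝ)⁻¹ * ∑ n ∈ Finset.range N,
    ‖xt N n ω - x0 n ω‖ with hTNdef
  set GN : Fin q → ℕ → Ω → ℝ :=
    fun j N ω => ⟪ΓhatN N ω (aN N j ω - a j), aN N j ω - a j⟫ with hGNdef
  have hTN_nonneg : ∀ N ω, 0 ≤ TN N ω := by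
    intro N ω
    exact mul_nonneg (by positivity) (Finset.sum_nonneg fun n _ => norm_nonneg _)
  have hGN_eq : ∀ j N ω, GN j N ω
      = (N:ℝ)⁻¹ * ∑ n ∈ Finset.range N, ⟪Xn n ω, aN N j ω - a j⟫^2 := by
    intro j N ω
    rw [hGNdef]
    simp only
    rw [hΓhatN, real_inner_smul_left, sum_inner]
    congr 1
    refine Finset.sum_congr rfl fun n _ => ?_
    rw [real_inner_smul_left, real_inner_comm]
    ring
  have hnorm_eq : ∀ N n ω,
      ‖xt N n ω - x0 n ω‖^2 = ∑ j : Fin q, ⟪Xn n ω, aN N j ω - a j⟫^2 := by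
    intro N n ω
    rw [EuclideanSpace.norm_eq, Real.sq_sqrt (Finset.sum_nonneg fun j _ => by positivity)]
    refine Finset.sum_congr rfl fun j _ => ?_
    have happ : (xt N n ω - x0 n ω) j = ⟪Xn n ω, aN N j ω⟫ - ⟪Xn n ω, a j⟫ := rfl
    rw [happ, Real.norm_eq_abs, sq_abs, ← inner_sub_right]
  have hTN_le : ∀ N ω, TN N ω ≤ Real.sqrt (∑ j : Fin q, GN j N ω) := by
    intro N ω
    have hsq : TN N ω ^ 2 ≤ ∑ j : Fin q, GN j N ω := by
      have h1 : (∑ n ∈ Finset.range N, ‖xt N n ω - x0 n ω‖)^2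
          ≤ (N:ℝ) * ∑ n ∈ Finset.range N, ‖xt N n ω - x0 n ω‖^2 := by
        have := sq_sum_le_card_mul_sum_sq (s := Finset.range N)
          (f := fun n => ‖xt N n ω - x0 n ω‖)
        simpa using this
      have h2 : TN N ω ^ 2 ≤ ((N:ℝ)⁻¹)^2 * ((N:ℝ) * ∑ n ∈ Finset.range N,
          ‖xt N n ω - x0 n ω‖^2) := by
        rw [hTNdef]
        simp only [mul_pow]
        exact mul_le_mul_of_nonneg_left h1 (by positivity)
      have h3 : ((N:ℝ)⁻¹)^2 * (N:ℝ) = (N:ℝ)⁻¹ := by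
        rcases Nat.eq_zero_or_pos N with h | h
        · subst h; simp
        · have hN : (N:ℝ) ≠ 0 := Nat.cast_ne_zero.2 h.ne'
          field_simp
      calc TN N ω ^ 2
          ≤ ((N:ℝ)⁻¹)^2 * ((N:ℝ) * ∑ n ∈ Finset.range N, ‖xt N n ω - x0 n ω‖^2) := h2
        _ = (N:ℝ)⁻¹ * ∑ n ∈ Finset.range N, ‖xt N n ω - x0 n ω‖^2 := by
          rw [← mul_assoc, h3]
        _ = (N:ℝ)⁻¹ * ∑ n ∈ Finset.range N, ∑ j : Fin q, ⟪Xn n ω, aN N j ω - a j⟫^2 := by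
          congr 1
          exact Finset.sum_congr rfl fun n _ => hnorm_eq N n ω
        _ = ∑ j : Fin q, (N:ℝ)⁻¹ * ∑ n ∈ Finset.range N, ⟪Xn n ω, aN N j ω - a j⟫^2 := by
          rw [Finset.sum_comm, Finset.mul_sum]
        _ = ∑ j : Fin q, GN j N ω :=
          Finset.sum_congr rfl fun j _ => (hGN_eq j N ω).symm
    calc TN N ω = Real.sqrt (TN N ω ^ 2) := (Real.sqrt_sq (hTN_nonneg N ω)).symm
      _ ≤ Real.sqrt (∑ j : Fin q, GN j N ω) := Real.sqrt_le_sqrt hsq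
  -- plug-in comparison
  have hplug : ∀ w ∈ W, ∀ (N : ℕ) (ω : Ω),
      |(N:ℝ)⁻¹ * ∑ n ∈ Finset.range N, ζ (Ztilde N n ω) w - BN w N ω| ≤ M * TN N ω := by
    intro w hw N ω
    have hterm : ∀ n ∈ Finset.range N, |ζ (Ztilde N n ω) w - ζ (Zn n ω) w|
        ≤ M * ‖xt N n ω - x0 n ω‖ := by
      intro n _
      have hmem1 : ((xt N n ω : EuclideanSpace ℝ (Fin q)), Yn n ω) ∈ O := by
        have h := hZtildeO N n ω
        rwa [hZtilde N n ω] at h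
      have hmem2 : ((x0 n ω : EuclideanSpace ℝ (Fin q)), Yn n ω) ∈ O := hZnO n ω
      have h9 := hA9 w hw (xt N n ω) (x0 n ω) (Yn n ω) hmem1 hmem2
      have heq1 : ζ (Ztilde N n ω) w = ζ (xt N n ω, Yn n ω) w := by
        rw [hZtilde N n ω]
      have heq2 : ζ (Zn n ω) w = ζ (x0 n ω, Yn n ω) w := rfl
      rw [heq1, heq2]
      exact le_trans h9 (mul_le_mul_of_nonneg_right (hCM w hw) (norm_nonneg _))
    calc |(N:ℝ)⁻¹ * ∑ n ∈ Finset.range N, ζ (Ztilde N n ω) w - BN w N ω|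
        = (N:ℝ)⁻¹ * |∑ n ∈ Finset.range N, (ζ (Ztilde N n ω) w - ζ (Zn n ω) w)| := by
          rw [hBNdef]
          simp only
          rw [← mul_sub, ← Finset.sum_sub_distrib, abs_mul,
            abs_of_nonneg (by positivity : (0:ℝ) ≤ (N:ℝ)⁻¹)]
      _ ≤ (N:ℝ)⁻¹ * ∑ n ∈ Finset.range N, |ζ (Ztilde N n ω) w - ζ (Zn n ω) w| :=
          mul_le_mul_of_nonneg_left (Finset.abs_sum_le_sum_abs _ _) (by positivity)
      _ ≤ (N:ℝ)⁻¹ * ∑ n ∈ Finset.range N, M * ‖xt N n ω - x0 n ω‖ :=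
          mul_le_mul_of_nonneg_left (Finset.sum_le_sum hterm) (by positivity)
      _ = M * TN N ω := by
          rw [hTNdef]
          simp only
          rw [← Finset.mul_sum]
          ring
  -- distance of the true risk to the risk at a center
  have hRdist : ∀ k ∈ t, ∀ w ∈ W, w ∈ Metric.ball k (rad k) →
      |Rk k - ∫ ω', ζ (Z ω') w ∂P| ≤ EΔ k := by
    intro k hk w hw hb
    have hintw : Integrable (fun ω => ζ (Z ω) w) P :=
      (master (fun z => ζ z w) (hA10 w hw) (hζbound2 w hw)).1
    have hintk := (hmaster1 k hk).1
    have hintk2 := (hmaster2 k hk).1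
    have hstep : Rk k - ∫ ω', ζ (Z ω') w ∂P = ∫ ω, (ζ (Z ω) k - ζ (Z ω) w) ∂P := by
      rw [integral_sub hintk2 hintw]
    rw [hstep]
    calc |∫ ω, (ζ (Z ω) k - ζ (Z ω) w) ∂P| ≤ ∫ ω, |ζ (Z ω) k - ζ (Z ω) w| ∂P := by
          simpa [Real.norm_eq_abs] using
            norm_integral_le_integral_norm (μ := P) (fun ω => ζ (Z ω) k - ζ (Z ω) w)
      _ ≤ ∫ ω, Δ k (rad k) (Z ω) ∂P := by
          refine integral_mono (hintk2.sub hintw).abs hintk fun ω => ?_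
          rw [abs_sub_comm]
          exact hΔ_bound k (htW k hk) (rad k) (Z ω) (hZO ω) w hw hb
      _ = EΔ k := rfl
  -- distance of the empirical risk to the risk at a center
  have hBdist : ∀ k ∈ t, ∀ w ∈ W, w ∈ Metric.ball k (rad k) → ∀ (N : ℕ) (ω : Ω),
      |BN w N ω - BN k N ω| ≤ AN k N ω := by
    intro k hk w hw hb N ω
    calc |BN w N ω - BN k N ω|
        = (N:ℝ)⁻¹ * |∑ n ∈ Finset.range N, (ζ (Zn n ω) w - ζ (Zn n ω) k)| := by
          rw [hBNdef]
          simp only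
          rw [← mul_sub, ← Finset.sum_sub_distrib, abs_mul,
            abs_of_nonneg (by positivity : (0:ℝ) ≤ (N:ℝ)⁻¹)]
      _ ≤ (N:ℝ)⁻¹ * ∑ n ∈ Finset.range N, |ζ (Zn n ω) w - ζ (Zn n ω) k| :=
          mul_le_mul_of_nonneg_left (Finset.abs_sum_le_sum_abs _ _) (by positivity)
      _ ≤ (N:ℝ)⁻¹ * ∑ n ∈ Finset.range N, Δ k (rad k) (Zn n ω) := by
          refine mul_le_mul_of_nonneg_left (Finset.sum_le_sum fun n _ => ?_) (by positivity)
          exact hΔ_bound k (htW k hk) (rad k) (Zn n ω) (hZnO' n ω) w hw hb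
      _ = AN k N ω := rfl
  -- the master pointwise bound
  have hmain : ∀ (N : ℕ) (ω : Ω), ∀ w ∈ W,
      |(N:ℝ)⁻¹ * ∑ n ∈ Finset.range N, ζ (Ztilde N n ω) w - ∫ ω', ζ (Z ω') w ∂P|
        ≤ M * TN N ω + V N ω + ε/2 := by
    intro N ω w hw
    obtain ⟨k, hk, hbk⟩ := Set.mem_iUnion₂.1 (hcov hw)
    have h1 := hplug w hw N ω
    have h2 := hBdist k hk w hw hbk N ω
    have hsingle : |AN k N ω - EΔ k| + |BN k N ω - Rk k| ≤ V N ω := by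
      rw [hVdef]
      exact Finset.single_le_sum
        (f := fun k => |AN k N ω - EΔ k| + |BN k N ω - Rk k|)
        (fun k _ => add_nonneg (abs_nonneg _) (abs_nonneg _)) hk
    have h4 : |Rk k - ∫ ω', ζ (Z ω') w ∂P| ≤ EΔ k := hRdist k hk w hw hbk
    have h5 : EΔ k ≤ ε/4 := le_of_lt (hradI k (htW k hk))
    have hAN : AN k N ω ≤ |AN k N ω - EΔ k| + EΔ k := by
      have := le_abs_self (AN k N ω - EΔ k); linarith
    have t1 := aux_abs_chain ((N:ℝ)⁻¹ * ∑ n ∈ Finset.range N, ζ (Ztilde N n ω) w)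
      (BN w N ω) (BN k N ω) (Rk k) (∫ ω', ζ (Z ω') w ∂P)
    have habs1 := le_abs_self (BN k N ω - Rk k)
    linarith
  -- bound on the sup
  have hS : ∀ (N : ℕ) (ω : Ω),
      sSup ((fun w => |(N : ℝ)⁻¹ * ∑ n ∈ Finset.range N, ζ (Ztilde N n ω) w
          - ∫ ω', ζ (Z ω') w ∂P|) '' W) ≤ M * TN N ω + V N ω + ε/2 := by
    intro N ω
    refine Real.sSup_le ?_ ?_
    · rintro x ⟨w, hw, rfl⟩
      exact hmain N ω w hw
    · have h1 : 0 ≤ M * TN N ω := mul_nonneg hMpos.le (hTN_nonneg N ω)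
      have h2 := hV_nonneg N ω
      linarith
  -- set inclusion
  set c : ℝ := (ε/(4*M))^2 / q with hcdef
  have hsub : ∀ N : ℕ,
      {ω | ε < sSup ((fun w => |(N : ℝ)⁻¹ * ∑ n ∈ Finset.range N, ζ (Ztilde N n ω) w
          - ∫ ω', ζ (Z ω') w ∂P|) '' W)}
        ⊆ (⋃ j : Fin q, {ω | c < GN j N ω}) ∪ {x | ε/4 ≤ dist (V N x) 0} := by
    intro N ω hω
    simp only [Set.mem_setOf_eq] at hω
    by_contra hcon
    rw [Set.mem_union] at hcon
    push_neg at hcon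
    obtain ⟨hc1, hc2⟩ := hcon
    rw [Set.mem_iUnion] at hc1
    push_neg at hc1
    have hG : ∀ j : Fin q, GN j N ω ≤ c := by
      intro j
      by_contra hj
      exact hc1 j (not_le.1 hj)
    have hGsum : ∑ j : Fin q, GN j N ω ≤ (ε/(4*M))^2 := by
      calc ∑ j : Fin q, GN j N ω ≤ ∑ _j : Fin q, c := Finset.sum_le_sum fun j _ => hG j
        _ = (q : ℝ) * c := by
          simp [Finset.sum_const, nsmul_eq_mul, Finset.card_univ]
        _ ≤ (ε/(4*M))^2 := by
          rcases Nat.eq_zero_or_pos q with h | h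
          · subst h
            simp only [Nat.cast_zero, zero_mul]
            positivity
          · have hq : (q:ℝ) ≠ 0 := Nat.cast_ne_zero.2 h.ne'
            rw [hcdef, mul_comm, div_mul_cancel₀ _ hq]
    have hT : TN N ω ≤ ε/(4*M) := by
      calc TN N ω ≤ Real.sqrt (∑ j : Fin q, GN j N ω) := hTN_le N ω
        _ ≤ Real.sqrt ((ε/(4*M))^2) := Real.sqrt_le_sqrt hGsum
        _ = ε/(4*M) := Real.sqrt_sq (by positivity)
    have hMT : M * TN N ω ≤ ε/4 := by
      have h1 := mul_le_mul_of_nonneg_left hT hMpos.le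
      have h2 : M * (ε/(4*M)) = ε/4 := by
        field_simp
      linarith
    have hVb : V N ω < ε/4 := by
      have hd : dist (V N ω) 0 < ε/4 := not_le.1 hc2
      rw [Real.dist_eq, sub_zero] at hd
      exact lt_of_le_of_lt (le_abs_self _) hd
    have hSS := hS N ω
    linarith
  -- conclude
  have hle : ∀ N : ℕ,
      P {ω | ε < sSup ((fun w => |(N : ℝ)⁻¹ * ∑ n ∈ Finset.range N, ζ (Ztilde N n ω) w
          - ∫ ω', ζ (Z ω') w ∂P|) '' W)}
        ≤ (∑ j : Fin q, P {ω | c < GN j N ω}) + P {x | ε/4 ≤ dist (V N x) 0} := by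
    intro N
    calc P _ ≤ P ((⋃ j : Fin q, {ω | c < GN j N ω}) ∪ {x | ε/4 ≤ dist (V N x) 0}) :=
          measure_mono (hsub N)
      _ ≤ P (⋃ j : Fin q, {ω | c < GN j N ω}) + P {x | ε/4 ≤ dist (V N x) 0} :=
          measure_union_le _ _
      _ ≤ _ := add_le_add_left (measure_iUnion_fintype_le _ _) _
  have hright : Filter.Tendsto (fun N : ℕ =>
      (∑ j : Fin q, P {ω | c < GN j N ω}) + P {x | ε/4 ≤ dist (V N x) 0})
      Filter.atTop (nhds 0) := by
    have h1 : Filter.Tendsto (fun N : ℕ => ∑ j : Fin q, P {ω | c < GN j N ω})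
        Filter.atTop (nhds 0) := by
      have h0 : (0 : ENNReal) = ∑ _j : Fin q, 0 := by simp
      rw [h0]
      refine tendsto_finset_sum _ fun j _ => ?_
      have hc : 0 < c := by
        have hq : 0 < q := j.pos
        have hεM : 0 < ε/(4*M) := by positivity
        rw [hcdef]
        positivity
      exact haNcons j c hc
    have h2 := hVtim (ε/4) (by positivity)
    have h3 := h1.add h2
    simpa using h3
  exact tendsto_of_tendsto_of_tendsto_of_le_of_le tendsto_const_nhds hright
    (fun N => zero_le) hle
end

section
/- Uniform strong law of large numbers over a compact parameter set: let (Z_n)_{n≥1} be i.i.d. random elements of a measurable set O ⊆ ℝ^m, W a nonempty compact subset of ℝ^p, and ζ : O × W → ℝ a function such that ζ(z,·) is continuous on W for every z ∈ O, ζ(·,w) is measurable for every w ∈ W, and there is a measurable ζ̃ : O → ℝ with |ζ(z,w)| ≤ ζ̃(z) for all z,w and E[ζ̃(Z₁)] < ∞. Then sup_{w∈W} |(1/N) Σ_{n=1}^N ζ(Z_n, w) − E[ζ(Z₁,w)]| → 0 almost surely as N → ∞. -/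
open MeasureTheory ProbabilityTheory Topology Set Filter

lemma measurable_into_continuousMap {α K : Type*} [MeasurableSpace α]
    [TopologicalSpace K] [CompactSpace K] [T2Space K] [SecondCountableTopology K] [Nonempty K]
    [MeasurableSpace C(K, ℝ)] [BorelSpace C(K, ℝ)]
    {g : α → C(K, ℝ)} (heval : ∀ x : K, Measurable fun a => g a x) :
    Measurable g := by
  obtain ⟨D, Dcount, Ddense⟩ := TopologicalSpace.exists_countable_dense K
  -- distance to a fixed continuous map is measurable
  have hdist : ∀ c : C(K, ℝ), Measurable fun a => dist (g a) c := by
    intro c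
    apply measurable_of_Iic
    intro r
    have key : ∀ f : C(K, ℝ), dist f c ≤ r ↔ ∀ x ∈ D, dist (f x) (c x) ≤ r := by
      intro f
      rw [ContinuousMap.dist_le_iff_of_nonempty]
      constructor
      · exact fun h x _ => h x
      · intro h x
        have hcl : IsClosed {y : K | dist (f y) (c y) ≤ r} :=
          isClosed_le (by fun_prop) continuous_const
        have : closure D ⊆ {y : K | dist (f y) (c y) ≤ r} := hcl.closure_subset_iff.2 h
        exact this (by rw [Ddense.closure_eq]; trivial)
    have : (fun a => dist (g a) c) ⁻¹' Iic r = ⋂ x ∈ D, {a | dist (g a x) (c x) ≤ r} := by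
      ext a
      simp only [mem_preimage, mem_Iic, mem_iInter, mem_setOf_eq, key (g a)]
    rw [this]
    exact MeasurableSet.biInter Dcount fun x _ =>
      measurableSet_le ((heval x).dist measurable_const) measurable_const
  -- now conclude using separability of C(K, ℝ)
  apply measurable_of_isOpen
  intro U hU
  obtain ⟨E, Ecount, Edense⟩ := TopologicalSpace.exists_countable_dense C(K, ℝ)
  set T : Set (C(K, ℝ) × ℚ) := {p | p.1 ∈ E ∧ 0 < (p.2 : ℝ) ∧ Metric.ball p.1 (p.2 : ℝ) ⊆ U}
    with hT
  have hTc : T.Countable := by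
    apply (Ecount.prod (countable_univ (α := ℚ))).mono
    intro p hp
    exact Set.mem_prod.2 ⟨hp.1, trivial⟩
  have hUeq : U = ⋃ p ∈ T, Metric.ball p.1 (p.2 : ℝ) := by
    ext x
    constructor
    · intro hx
      obtain ⟨ε, εpos, hball⟩ := Metric.isOpen_iff.1 hU x hx
      obtain ⟨c, hcball, hcE⟩ := Metric.dense_iff.1 Edense x (ε / 2) (by positivity)
      have hxc : dist x c < ε / 2 := by have := Metric.mem_ball.1 hcball; rwa [dist_comm] at this
      obtain ⟨q, hq1, hq2⟩ := exists_rat_btwn hxc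
      refine mem_iUnion₂.2 ⟨(c, q), ⟨hcE, lt_of_le_of_lt dist_nonneg hq1, ?_⟩, ?_⟩
      · intro y hy
        apply hball
        have : dist y x ≤ dist y c + dist c x := dist_triangle _ _ _
        have h2 : dist y c < (q : ℝ) := Metric.mem_ball.1 hy
        have h3 : dist c x < ε / 2 := by rwa [dist_comm]
        calc dist y x ≤ dist y c + dist c x := this
          _ < q + ε / 2 := by gcongr <;> assumption
          _ ≤ ε / 2 + ε / 2 := add_le_add_left hq2.le _
          _ = ε := by ring
      · exact Metric.mem_ball.2 (by rw [dist_comm] at hq1 ⊢; exact hq1)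
    · intro hx
      obtain ⟨p, hp, hxp⟩ := mem_iUnion₂.1 hx
      exact hp.2.2 hxp
  rw [hUeq]
  simp only [preimage_iUnion]
  refine MeasurableSet.biUnion hTc fun p _ => ?_
  have : g ⁻¹' Metric.ball p.1 (p.2 : ℝ) = {a | dist (g a) p.1 < (p.2 : ℝ)} := by
    ext a; simp [Metric.mem_ball]
  rw [this]
  exact measurableSet_lt (hdist p.1) measurable_const


/-- Uniform strong law of large numbers over a compact parameter set:
for i.i.d. `Z_n` with values in a measurable `O ⊆ ℝ^m`, `W ⊆ ℝ^p` compact nonempty, and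
`ζ` continuous in `w`, measurable in `z`, dominated by an integrable `ζ̃`, the empirical
means of `ζ(Z_n, ·)` converge to `E[ζ(Z₁, ·)]` uniformly on `W`, almost surely. -/
theorem uniform_strong_law_of_large_numbers
    {Ω : Type*} [MeasurableSpace Ω] (P : Measure Ω) [IsProbabilityMeasure P]
    {m p : ℕ}
    (O : Set (EuclideanSpace ℝ (Fin m))) (hO : MeasurableSet O)
    (W : Set (EuclideanSpace ℝ (Fin p))) (hWne : W.Nonempty) (hWcpt : IsCompact W)
    (Z : ℕ → Ω → EuclideanSpace ℝ (Fin m))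
    (hZmeas : ∀ n, Measurable (Z n))
    (hZO : ∀ n ω, Z n ω ∈ O)
    (hindep : iIndepFun Z P)
    (hident : ∀ n, Measure.map (Z n) P = Measure.map (Z 0) P)
    (ζ : EuclideanSpace ℝ (Fin m) → EuclideanSpace ℝ (Fin p) → ℝ)
    (hζcont : ∀ z ∈ O, ContinuousOn (ζ z) W)
    (hζmeas : ∀ w ∈ W, Measurable fun z : O => ζ (z : EuclideanSpace ℝ (Fin m)) w)
    (ζtilde : EuclideanSpace ℝ (Fin m) → ℝ)
    (hζtmeas : Measurable fun z : O => ζtilde (z : EuclideanSpace ℝ (Fin m)))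
    (hdom : ∀ z ∈ O, ∀ w ∈ W, |ζ z w| ≤ ζtilde z)
    (hint : Integrable (fun ω => ζtilde (Z 0 ω)) P) :
    ∀ᵐ ω ∂P,
      Filter.Tendsto
        (fun N : ℕ => sSup ((fun w =>
          |(N : ℝ)⁻¹ * ∑ n ∈ Finset.range N, ζ (Z n ω) w - ∫ ω', ζ (Z 0 ω') w ∂P|) '' W))
        Filter.atTop (nhds 0) := by
  classical
  haveI : CompactSpace W := isCompact_iff_compactSpace.mp hWcpt
  haveI : Nonempty W := hWne.to_subtype
  borelize C(W, ℝ)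
  have hcont : ∀ z : O, Continuous fun w : W => ζ (z : EuclideanSpace ℝ (Fin m)) w :=
    fun z => (hζcont z z.2).restrict
  let g : O → C(W, ℝ) := fun z => ⟨fun w => ζ z w, hcont z⟩
  have hg : Measurable g :=
    measurable_into_continuousMap (fun w => hζmeas w w.2)
  let G : EuclideanSpace ℝ (Fin m) → C(W, ℝ) :=
    fun z => if h : z ∈ O then g ⟨z, h⟩ else (0 : C(W, ℝ))
  have hG : Measurable G := Measurable.dite hg measurable_const hO
  set X : ℕ → Ω → C(W, ℝ) := fun n ω => G (Z n ω) with hXdef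
  have hXg : ∀ n ω, X n ω = g ⟨Z n ω, hZO n ω⟩ := fun n ω => dif_pos (hZO n ω)
  have hXmeas : ∀ n, Measurable (X n) := fun n => hG.comp (hZmeas n)
  have hnneg : ∀ z ∈ O, 0 ≤ ζtilde z := fun z hz =>
    (abs_nonneg _).trans (hdom z hz hWne.choose hWne.choose_spec)
  have hnorm : ∀ n ω, ‖X n ω‖ ≤ ζtilde (Z n ω) := by
    intro n ω
    rw [hXg, ContinuousMap.norm_le _ (hnneg _ (hZO n ω))]
    intro w
    exact (Real.norm_eq_abs _).le.trans (le_of_eq_of_le rfl (hdom _ (hZO n ω) w w.2))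
  have hintX : Integrable (X 0) P :=
    Integrable.mono hint (hXmeas 0).aestronglyMeasurable
      (Filter.Eventually.of_forall fun ω => (hnorm 0 ω).trans (le_abs_self _))
  have hpair : Pairwise (Function.onFun (IndepFun · · P) X) := fun i j hij =>
    (hindep.indepFun hij).comp hG hG
  have hid : ∀ n, IdentDistrib (X n) (X 0) P P := fun n =>
    IdentDistrib.comp ⟨(hZmeas n).aemeasurable, (hZmeas 0).aemeasurable, hident n⟩ hG
  have hsl := ProbabilityTheory.strong_law_ae X hintX hpair hid
  have hI : ∀ w : W, (∫ ω, X 0 ω ∂P) w = ∫ ω, ζ (Z 0 ω) (w : EuclideanSpace ℝ (Fin p)) ∂P := by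
    intro w
    have h1 := (ContinuousMap.evalCLM ℝ (w : W)).integral_comp_comm hintX
    have h2 : ∀ ω : Ω, (ContinuousMap.evalCLM ℝ (w : W)) (X 0 ω)
        = ζ (Z 0 ω) (w : EuclideanSpace ℝ (Fin p)) := fun ω => by rw [hXg]; rfl
    calc (∫ ω, X 0 ω ∂P) w = (ContinuousMap.evalCLM ℝ (w : W)) (∫ ω, X 0 ω ∂P) := rfl
      _ = ∫ ω, (ContinuousMap.evalCLM ℝ (w : W)) (X 0 ω) ∂P := h1.symm
      _ = ∫ ω, ζ (Z 0 ω) (w : EuclideanSpace ℝ (Fin p)) ∂P := by simp_rw [h2]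
  filter_upwards [hsl] with ω hω
  rw [tendsto_iff_norm_sub_tendsto_zero] at hω
  have hfun : (fun N : ℕ => sSup ((fun w =>
        |(N : ℝ)⁻¹ * ∑ n ∈ Finset.range N, ζ (Z n ω) w - ∫ ω', ζ (Z 0 ω') w ∂P|) '' W))
      = fun N : ℕ => ‖(N : ℝ)⁻¹ • (∑ n ∈ Finset.range N, X n ω) - ∫ ω', X 0 ω' ∂P‖ := by
    funext N
    have himg : (fun w => |(N : ℝ)⁻¹ * ∑ n ∈ Finset.range N, ζ (Z n ω) w
          - ∫ ω', ζ (Z 0 ω') w ∂P|) '' W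
        = Set.range (fun w : W =>
          ‖((N : ℝ)⁻¹ • (∑ n ∈ Finset.range N, X n ω) - ∫ ω', X 0 ω' ∂P) w‖) := by
      rw [Set.image_eq_range]
      have hfw : ∀ w : W,
          |(N : ℝ)⁻¹ * ∑ n ∈ Finset.range N, ζ (Z n ω) (w : EuclideanSpace ℝ (Fin p))
            - ∫ ω', ζ (Z 0 ω') (w : EuclideanSpace ℝ (Fin p)) ∂P|
          = ‖((N : ℝ)⁻¹ • (∑ n ∈ Finset.range N, X n ω) - ∫ ω', X 0 ω' ∂P) w‖ := by
        intro w
        have : (((N : ℝ)⁻¹ • (∑ n ∈ Finset.range N, X n ω) - ∫ ω', X 0 ω' ∂P) : C(W, ℝ)) w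
          = (N : ℝ)⁻¹ * ∑ n ∈ Finset.range N, ζ (Z n ω) (w : EuclideanSpace ℝ (Fin p))
            - ∫ ω', ζ (Z 0 ω') (w : EuclideanSpace ℝ (Fin p)) ∂P := by
          rw [ContinuousMap.sub_apply, ContinuousMap.smul_apply, ContinuousMap.sum_apply, hI w]
          simp only [smul_eq_mul]
          congr 1
          congr 1
          exact Finset.sum_congr rfl fun n _ => by rw [hXg]; rfl
        rw [this, Real.norm_eq_abs]
      exact congrArg Set.range (funext hfw)
    rw [himg, ContinuousMap.norm_eq_iSup_norm]
    rfl
  rw [hfun]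
  exact hω
end
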